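/- arXiv:2212.00746 — 7 statements merged into one kernel-verified Lean document; each statement's English description precedes it below -/
import Mathlib

section
/- Let n ≥ 1, d1, d2 ≥ 1, T = d1 + d2 − 1 and D = max(d1, d2). Let H be a (d1·n)×(d2·n) real block Hankel matrix with n×n blocks H_1,…,H_T that admits a positive semidefinite square extension H□ ∈ ℝ^{Dn×Dn} of rank r whose first block H_1 has rank r and at least one other block H_j, j > 1, has rank r. Then there exist a real n×r matrix U with orthonormal columns, a positive definite diagonal r×r matrix Σ, and an r×r real matrix N that is Σ-self-adjoint (i.e., NΣ = ΣN*), such that H_k = U N^{k−1} Σ U* for every k ∈ [T], and H admits the generalized Vandermonde decomposition H = V_{d1}(U,N) Σ V_{d2}(U,N)*, where V_m(U,N) denotes the (n·m)×r block column matrix with j-th block U N^{j−1} for j ∈ [m]. -/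
noncomputable section

open Matrix

/-- The block Hankel operator. -/
def blockHankel (n d1 d2 T : ℕ) (X : Fin T → Matrix (Fin n) (Fin n) ℝ) :
    Matrix (Fin d1 × Fin n) (Fin d2 × Fin n) ℝ :=
  Matrix.of fun p q =>
    if h : p.1.val + q.1.val < T then X ⟨p.1.val + q.1.val, h⟩ p.2 q.2 else 0

/-- The generalized Vandermonde matrix `V_m(U,N)`, obtained by vertically stacking the blocks
`U N^0, U N^1, …, U N^{m−1}`. -/
def vandStack (n r m : ℕ) (U : Matrix (Fin n) (Fin r) ℝ) (N : Matrix (Fin r) (Fin r) ℝ) :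
    Matrix (Fin m × Fin n) (Fin r) ℝ :=
  Matrix.of fun p l => (U * N ^ p.1.val) p.2 l

set_option maxHeartbeats 4000000

lemma tri_apply {m p q : Type*} [Fintype q] [DecidableEq q] (X : Matrix m q ℝ)
    (Y : Matrix p q ℝ) (σ : q → ℝ) (a : m) (b : p) :
    (X * Matrix.diagonal σ * Yᵀ) a b = ∑ l, X a l * σ l * Y b l := by
  rw [Matrix.mul_apply]
  simp only [Matrix.mul_diagonal, Matrix.transpose_apply]

lemma psd_spectral {n r : ℕ} {M : Matrix (Fin n) (Fin n) ℝ} (hM : M.PosSemidef)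
    (hr : M.rank = r) :
    ∃ (U : Matrix (Fin n) (Fin r) ℝ) (σ : Fin r → ℝ),
      Uᵀ * U = 1 ∧ (∀ l, 0 < σ l) ∧ M = U * Matrix.diagonal σ * Uᵀ := by
  classical
  have hH : M.IsHermitian := hM.1
  set V : Matrix (Fin n) (Fin n) ℝ := (hH.eigenvectorUnitary : Matrix (Fin n) (Fin n) ℝ) with hV
  set μ : Fin n → ℝ := hH.eigenvalues with hμ
  have hcard : Fintype.card {i // μ i ≠ 0} = r := by
    rw [← hH.rank_eq_card_non_zero_eigs, hr]
  have e : Fin r ≃ {i // μ i ≠ 0} := Fintype.equivOfCardEq (by simp [hcard])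
  refine ⟨Matrix.of fun a l => V a ((e l : {i // μ i ≠ 0}) : Fin n),
    fun l => μ ((e l : {i // μ i ≠ 0}) : Fin n), ?_, ?_, ?_⟩
  · have h1 : star V * V = 1 := Unitary.coe_star_mul_self hH.eigenvectorUnitary
    have h2 : ∀ i i' : Fin n, (∑ a, V a i * V a i') = if i = i' then 1 else 0 := by
      intro i i'
      have := congrFun (congrFun h1 i) i'
      simpa [Matrix.mul_apply, Matrix.one_apply, Matrix.conjTranspose_apply,
        Matrix.star_eq_conjTranspose] using this
    ext l l'
    simp only [Matrix.mul_apply, Matrix.transpose_apply, Matrix.of_apply]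
    rw [h2]
    simp only [Matrix.one_apply]
    by_cases h : l = l'
    · simp [h]
    · have : ((e l : {i // μ i ≠ 0}) : Fin n) ≠ ((e l' : {i // μ i ≠ 0}) : Fin n) := by
        intro hc
        exact h (e.injective (Subtype.ext hc))
      simp [h, this]
  · intro l
    have hne : μ ((e l : {i // μ i ≠ 0}) : Fin n) ≠ 0 := (e l).2
    have hnn : 0 ≤ μ ((e l : {i // μ i ≠ 0}) : Fin n) := hM.eigenvalues_nonneg _
    exact lt_of_le_of_ne hnn (Ne.symm hne)
  · have hMab : ∀ a b, M a b = ∑ i, V a i * μ i * V b i := by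
      intro a b
      conv_lhs => rw [hH.spectral_theorem, Unitary.conjStarAlgAut_apply]
      rw [Matrix.mul_apply]
      simp only [Matrix.mul_diagonal, Matrix.star_eq_conjTranspose,
        Matrix.conjTranspose_apply, star_trivial, Function.comp_apply,
        RCLike.ofReal_real_eq_id, id_eq]
      rfl
    ext a b
    rw [tri_apply, hMab]
    rw [← Finset.sum_filter_of_ne (p := fun i => μ i ≠ 0)
      (fun x _ hx h0 => hx (by rw [h0]; ring))]
    rw [Finset.sum_subtype (p := fun i => μ i ≠ 0)
      (Finset.filter (fun i => μ i ≠ 0) Finset.univ)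
      (fun x => by simp) (fun i => V a i * μ i * V b i)]
    rw [← Equiv.sum_comp e (fun i => V a (i : Fin n) * μ (i : Fin n) * V b (i : Fin n))]
    rfl

lemma core {n D r : ℕ} (hD1 : 1 ≤ D) (K : Fin (2 * D - 1) → Matrix (Fin n) (Fin n) ℝ)
    (U : Matrix (Fin n) (Fin r) ℝ) (σ : Fin r → ℝ) (Z : Fin D → Matrix (Fin r) (Fin n) ℝ)
    (hUU : Uᵀ * U = 1) (hσ : ∀ l, 0 < σ l)
    (hZ0 : Z ⟨0, by omega⟩ = Uᵀ)
    (hKZ : ∀ (i j : Fin D) (h : i.val + j.val < 2 * D - 1),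
      K ⟨i.val + j.val, h⟩ = (Z i)ᵀ * (Matrix.diagonal σ * Z j)) :
    ∃ N : Matrix (Fin r) (Fin r) ℝ, N * Matrix.diagonal σ = Matrix.diagonal σ * Nᵀ ∧
      ∀ (m : ℕ) (hm : m < 2 * D - 1),
        K ⟨m, hm⟩ = U * N ^ m * Matrix.diagonal σ * Uᵀ := by
  classical
  set S : Matrix (Fin r) (Fin r) ℝ := Matrix.diagonal σ with hS
  set S' : Matrix (Fin r) (Fin r) ℝ := Matrix.diagonal (fun l => (σ l)⁻¹) with hS'
  have hSS' : S * S' = 1 := by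
    rw [hS, hS', Matrix.diagonal_mul_diagonal]
    rw [show (fun i => σ i * (σ i)⁻¹) = fun _ => (1 : ℝ) from
      funext fun i => mul_inv_cancel₀ (ne_of_gt (hσ i))]
    exact Matrix.diagonal_one
  have hS'S : S' * S = 1 := by
    rw [hS, hS', Matrix.diagonal_mul_diagonal]
    rw [show (fun i => (σ i)⁻¹ * σ i) = fun _ => (1 : ℝ) from
      funext fun i => inv_mul_cancel₀ (ne_of_gt (hσ i))]
    exact Matrix.diagonal_one
  have hSt : Sᵀ = S := Matrix.diagonal_transpose σ
  have hS't : S'ᵀ = S' := Matrix.diagonal_transpose _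
  have cUU : ∀ {β : Type} (X : Matrix (Fin r) β ℝ), Uᵀ * (U * X) = X := by
    intro β X; rw [← Matrix.mul_assoc, hUU, Matrix.one_mul]
  have cSS' : ∀ {β : Type} (X : Matrix (Fin r) β ℝ), S * (S' * X) = X := by
    intro β X; rw [← Matrix.mul_assoc, hSS', Matrix.one_mul]
  have cS'S : ∀ {β : Type} (X : Matrix (Fin r) β ℝ), S' * (S * X) = X := by
    intro β X; rw [← Matrix.mul_assoc, hS'S, Matrix.one_mul]
  set i0 : Fin D := ⟨0, by omega⟩ with hi0def
  set i1 : Fin D := ⟨min 1 (D - 1), by omega⟩ with hi1def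
  set C : Matrix (Fin r) (Fin r) ℝ := Z i1 * U with hC
  set N : Matrix (Fin r) (Fin r) ℝ := S * C * S' with hN
  have hsym : U * (S * Z i1) = (Z i1)ᵀ * (S * Uᵀ) := by
    have e1 := hKZ i0 i1 (by omega)
    have e2 := hKZ i1 i0 (by omega)
    rw [hZ0, Matrix.transpose_transpose] at e1
    rw [hZ0] at e2
    rw [← e1, ← e2]
    exact congrArg K (Fin.ext (Nat.add_comm _ _))
  have hCS : S * C = Cᵀ * S := by
    calc S * C = Uᵀ * (U * (S * (Z i1 * U))) := (cUU _).symm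
      _ = Uᵀ * ((U * (S * Z i1)) * U) := by simp only [Matrix.mul_assoc]
      _ = Uᵀ * (((Z i1)ᵀ * (S * Uᵀ)) * U) := by rw [hsym]
      _ = Uᵀ * ((Z i1)ᵀ * (S * (Uᵀ * U))) := by simp only [Matrix.mul_assoc]
      _ = Uᵀ * ((Z i1)ᵀ * S) := by rw [hUU, Matrix.mul_one]
      _ = Cᵀ * S := by rw [hC, Matrix.transpose_mul]; simp only [Matrix.mul_assoc]
  have hNS : N * S = S * Nᵀ := by
    have hNt : Nᵀ = S' * (Cᵀ * S) := by
      rw [hN, Matrix.transpose_mul, Matrix.transpose_mul, hSt, hS't]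
      try simp only [Matrix.mul_assoc]
    calc N * S = S * (C * (S' * S)) := by rw [hN]; simp only [Matrix.mul_assoc]
      _ = S * C := by rw [hS'S, Matrix.mul_one]
      _ = Cᵀ * S := hCS
      _ = S * (S' * (Cᵀ * S)) := (cSS' _).symm
      _ = S * Nᵀ := by rw [hNt]
  have hSZ : ∀ (m : ℕ) (hm : m < D), S * Z ⟨m, hm⟩ = N ^ m * (S * Uᵀ) := by
    intro m
    induction m with
    | zero =>
      intro hm
      rw [show (⟨0, hm⟩ : Fin D) = i0 from rfl, hZ0, pow_zero, Matrix.one_mul]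
    | succ m ih =>
      intro hm
      have hm' : m < D := by omega
      have e3 : (Z i1)ᵀ * (S * Z ⟨m, hm'⟩) = U * (S * Z ⟨m + 1, hm⟩) := by
        have e1 := hKZ i1 ⟨m, hm'⟩ (by omega)
        have e2 := hKZ i0 ⟨m + 1, hm⟩ (by omega)
        rw [hZ0, Matrix.transpose_transpose] at e2
        rw [← e1, ← e2]
        exact congrArg K (Fin.ext (by simp only [hi0def, hi1def, Fin.val_mk]; omega))
      calc S * Z ⟨m + 1, hm⟩ = Uᵀ * (U * (S * Z ⟨m + 1, hm⟩)) := (cUU _).symm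
        _ = Uᵀ * ((Z i1)ᵀ * (S * Z ⟨m, hm'⟩)) := by rw [e3]
        _ = Cᵀ * (S * Z ⟨m, hm'⟩) := by
            rw [hC, Matrix.transpose_mul]; simp only [Matrix.mul_assoc]
        _ = (Cᵀ * S) * Z ⟨m, hm'⟩ := by simp only [Matrix.mul_assoc]
        _ = (S * C) * Z ⟨m, hm'⟩ := by rw [hCS]
        _ = (S * C) * (S' * (S * Z ⟨m, hm'⟩)) := by rw [cS'S]
        _ = (S * C * S') * (S * Z ⟨m, hm'⟩) := by simp only [Matrix.mul_assoc]
        _ = N * (N ^ m * (S * Uᵀ)) := by rw [← hN, ih hm']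
        _ = N ^ (m + 1) * (S * Uᵀ) := by rw [← Matrix.mul_assoc, ← pow_succ']
  have cSNt : ∀ (m : ℕ) {β : Type} (X : Matrix (Fin r) β ℝ),
      S * ((N ^ m)ᵀ * X) = N ^ m * (S * X) := by
    intro m
    induction m with
    | zero => intro β X; simp
    | succ m ih =>
      intro β X
      rw [pow_succ, Matrix.transpose_mul]
      calc S * ((Nᵀ * (N ^ m)ᵀ) * X) = (S * Nᵀ) * ((N ^ m)ᵀ * X) := by
            simp only [Matrix.mul_assoc]
        _ = (N * S) * ((N ^ m)ᵀ * X) := by rw [← hNS]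
        _ = N * (S * ((N ^ m)ᵀ * X)) := by simp only [Matrix.mul_assoc]
        _ = N * (N ^ m * (S * X)) := by rw [ih]
        _ = (N ^ m * N) * (S * X) := by
            rw [← Matrix.mul_assoc]
            congr 1
            rw [← pow_succ', ← pow_succ]
  refine ⟨N, hNS, ?_⟩
  intro m hm
  have hiD : min m (D - 1) < D := by omega
  have hjD : m - min m (D - 1) < D := by omega
  have e' : K ⟨m, hm⟩ = (Z ⟨min m (D - 1), hiD⟩)ᵀ * (S * Z ⟨m - min m (D - 1), hjD⟩) := by
    rw [show (⟨m, hm⟩ : Fin (2 * D - 1))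
        = ⟨(⟨min m (D - 1), hiD⟩ : Fin D).val + (⟨m - min m (D - 1), hjD⟩ : Fin D).val,
          show min m (D - 1) + (m - min m (D - 1)) < 2 * D - 1 by omega⟩ from
      Fin.ext (show m = min m (D - 1) + (m - min m (D - 1)) by omega)]
    exact hKZ _ _ _
  have hZi : Z ⟨min m (D - 1), hiD⟩ = S' * (N ^ min m (D - 1) * (S * Uᵀ)) := by
    rw [← hSZ _ hiD, cS'S]
  rw [e', hZi]
  have htr : (S' * (N ^ min m (D - 1) * (S * Uᵀ)))ᵀ
      = U * (S * ((N ^ min m (D - 1))ᵀ * S')) := by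
    simp only [Matrix.transpose_mul, hS't, hSt, Matrix.transpose_transpose, Matrix.mul_assoc]
  rw [htr]
  have hmin : min m (D - 1) + (m - min m (D - 1)) = m := by omega
  calc (U * (S * ((N ^ min m (D - 1))ᵀ * S'))) * (S * Z ⟨m - min m (D - 1), hjD⟩)
      = U * (S * ((N ^ min m (D - 1))ᵀ * (S' * (S * Z ⟨m - min m (D - 1), hjD⟩)))) := by
        simp only [Matrix.mul_assoc]
    _ = U * (S * ((N ^ min m (D - 1))ᵀ * Z ⟨m - min m (D - 1), hjD⟩)) := by rw [cS'S]
    _ = U * (N ^ min m (D - 1) * (S * Z ⟨m - min m (D - 1), hjD⟩)) := by rw [cSNt]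
    _ = U * (N ^ min m (D - 1) * (N ^ (m - min m (D - 1)) * (S * Uᵀ))) := by
        rw [hSZ _ hjD]
    _ = U * ((N ^ min m (D - 1) * N ^ (m - min m (D - 1))) * (S * Uᵀ)) := by
        simp only [Matrix.mul_assoc]
    _ = U * (N ^ m * (S * Uᵀ)) := by rw [← pow_add, hmin]
    _ = U * N ^ m * S * Uᵀ := by simp only [Matrix.mul_assoc]

lemma factor (n D r : ℕ) (hD1 : 1 ≤ D)
    (K : Fin (2 * D - 1) → Matrix (Fin n) (Fin n) ℝ)
    (hpsd : (blockHankel n D D (2 * D - 1) K).PosSemidef)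
    (hrank : (blockHankel n D D (2 * D - 1) K).rank = r)
    (hfirst : (K ⟨0, by omega⟩).rank = r) :
    ∃ (U : Matrix (Fin n) (Fin r) ℝ) (σ : Fin r → ℝ) (N : Matrix (Fin r) (Fin r) ℝ),
      Uᵀ * U = 1 ∧ (∀ l, 0 < σ l) ∧
        N * Matrix.diagonal σ = Matrix.diagonal σ * Nᵀ ∧
        (∀ (m : ℕ) (hm : m < 2 * D - 1),
          K ⟨m, hm⟩ = U * N ^ m * Matrix.diagonal σ * Uᵀ) := by
  classical
  obtain ⟨B, hB⟩ : ∃ B : Matrix (Fin D × Fin n) (Fin D × Fin n) ℝ,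
      blockHankel n D D (2 * D - 1) K = Bᴴ * B := by
    open scoped MatrixOrder in
    exact CStarAlgebra.nonneg_iff_eq_star_mul_self.mp hpsd.nonneg
  have hBt : Bᴴ = Bᵀ := by ext i j; simp [Matrix.conjTranspose_apply]
  rw [hBt] at hB
  set A : Fin D → Matrix (Fin D × Fin n) (Fin n) ℝ :=
    fun j => B.submatrix id (fun a => (j, a)) with hA
  have hKA : ∀ (i j : Fin D) (h : i.val + j.val < 2 * D - 1),
      K ⟨i.val + j.val, h⟩ = (A i)ᵀ * A j := by
    intro i j h
    ext a b
    have h2 := congrFun (congrFun hB ((i, a))) ((j, b))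
    have h3 : blockHankel n D D (2 * D - 1) K (i, a) (j, b) = K ⟨i.val + j.val, h⟩ a b := by
      unfold blockHankel
      simp only [Matrix.of_apply]
      rw [dif_pos h]
    rw [← h3, h2, Matrix.mul_apply, Matrix.mul_apply]
    rfl
  set i0 : Fin D := ⟨0, by omega⟩ with hi0
  have hK00 : K ⟨0, by omega⟩ = (A i0)ᵀ * A i0 := hKA i0 i0 (by omega)
  have hrankB : B.rank = r := by
    rw [← Matrix.rank_transpose_mul_self, ← hB, hrank]
  have hrankA0 : (A i0).rank = r := by
    rw [← Matrix.rank_transpose_mul_self, ← hK00, hfirst]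
  set E : Matrix (Fin D × Fin n) (Fin n) ℝ :=
    Matrix.of (fun p a => if p = (i0, a) then (1 : ℝ) else 0) with hE
  have hAE : A i0 = B * E := by
    ext p a
    simp only [Matrix.mul_apply, hE, Matrix.of_apply, mul_ite, mul_one, mul_zero]
    rw [Finset.sum_ite_eq' Finset.univ (i0, a) (fun q => B p q)]
    simp only [Finset.mem_univ, if_true]
    rfl
  have hrange : LinearMap.range (A i0).mulVecLin = LinearMap.range B.mulVecLin := by
    apply Submodule.eq_of_le_of_finrank_le
    · rw [hAE, Matrix.mulVecLin_mul]
      exact LinearMap.range_comp_le_range _ _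
    · show B.rank ≤ (A i0).rank
      omega
  have hWex : ∀ (j : Fin D), ∃ Wj : Matrix (Fin n) (Fin n) ℝ, A j = A i0 * Wj := by
    intro j
    have hcol : ∀ a : Fin n, ∃ w, (A i0).mulVec w = fun p => A j p a := by
      intro a
      have hmem : (fun p => A j p a) ∈ LinearMap.range B.mulVecLin := by
        refine ⟨Pi.single (j, a) 1, ?_⟩
        rw [Matrix.mulVecLin_apply, Matrix.mulVec_single]
        funext p
        simp [hA]
      rw [← hrange] at hmem
      exact hmem
    choose w hw using hcol
    refine ⟨Matrix.of (fun a' a => w a a'), ?_⟩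
    ext p a
    have h4 := congrFun (hw a) p
    rw [Matrix.mulVec] at h4
    simp only [Matrix.mul_apply, Matrix.of_apply]
    rw [← h4]
    rfl
  choose W hAW using hWex
  set W' : Fin D → Matrix (Fin n) (Fin n) ℝ := fun j => if j = i0 then 1 else W j with hW'
  have hAW' : ∀ j, A j = A i0 * W' j := by
    intro j
    by_cases h : j = i0
    · subst h; simp [hW']
    · rw [hW']; simp only [if_neg h]; exact hAW j
  obtain ⟨U, σ, hUU, hσ, hK0⟩ := psd_spectral
    (hK00 ▸ Matrix.posSemidef_conjTranspose_mul_self (A i0)) hfirst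
  have hUSU : (A i0)ᵀ * A i0 = U * Matrix.diagonal σ * Uᵀ := by rw [← hK00, hK0]
  have hZex : ∃ Z : Fin D → Matrix (Fin r) (Fin n) ℝ, Z i0 = Uᵀ ∧
      ∀ (i j : Fin D) (h : i.val + j.val < 2 * D - 1),
        K ⟨i.val + j.val, h⟩ = (Z i)ᵀ * (Matrix.diagonal σ * Z j) := by
    refine ⟨fun j => Uᵀ * W' j, ?_, ?_⟩
    · show Uᵀ * W' i0 = Uᵀ
      rw [hW']
      simp
    · intro i j h
      rw [hKA i j h, hAW' i, hAW' j]
      calc (A i0 * W' i)ᵀ * (A i0 * W' j)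
          = (W' i)ᵀ * (((A i0)ᵀ * A i0) * W' j) := by
            rw [Matrix.transpose_mul]; simp only [Matrix.mul_assoc]
        _ = (W' i)ᵀ * ((U * (Matrix.diagonal σ * (Uᵀ * W' j)))) := by
            rw [hUSU]; simp only [Matrix.mul_assoc]
        _ = (Uᵀ * W' i)ᵀ * (Matrix.diagonal σ * (Uᵀ * W' j)) := by
            rw [Matrix.transpose_mul, Matrix.transpose_transpose]
            simp only [Matrix.mul_assoc]
  obtain ⟨Z, hZ0, hKZ⟩ := hZex
  obtain ⟨N, hNS, hKall⟩ := core hD1 K U σ Z hUU hσ hZ0 hKZ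
  exact ⟨U, σ, N, hUU, hσ, hNS, hKall⟩

/-- Generalized Vandermonde decomposition: if a block Hankel matrix with blocks
`H_1, …, H_T` admits a positive semidefinite square extension of rank `r` whose first block
has rank `r` and at least one other block has rank `r`, then there exist `U ∈ ℝ^{n×r}` with
orthonormal columns, a positive definite diagonal `Σ`, and a `Σ`-self-adjoint `N`
(`NΣ = ΣN*`) such that `H_k = U N^{k−1} Σ U*` for all `k ∈ [T]` and
`H = V_{d1}(U,N) Σ V_{d2}(U,N)*`. -/
theorem blockHankel_generalized_vandermonde (n d1 d2 T D r : ℕ)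
    (hn : 1 ≤ n) (hd1 : 1 ≤ d1) (hd2 : 1 ≤ d2)
    (hT : T = d1 + d2 - 1) (hD : D = max d1 d2)
    (Hb : Fin T → Matrix (Fin n) (Fin n) ℝ)
    (K : Fin (2 * D - 1) → Matrix (Fin n) (Fin n) ℝ)
    (hext : ∀ k : Fin T, K ⟨k.val, by
        have h1 := le_max_left d1 d2
        have h2 := le_max_right d1 d2
        have h3 := k.isLt
        omega⟩ = Hb k)
    (hpsd : (blockHankel n D D (2 * D - 1) K).PosSemidef)
    (hrank : (blockHankel n D D (2 * D - 1) K).rank = r)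
    (hfirst : (K ⟨0, by
        have h1 := le_max_left d1 d2
        omega⟩).rank = r)
    (hother : ∃ j : Fin (2 * D - 1), 0 < j.val ∧ (K j).rank = r) :
    ∃ (U : Matrix (Fin n) (Fin r) ℝ) (σ : Fin r → ℝ) (N : Matrix (Fin r) (Fin r) ℝ),
      Uᵀ * U = 1 ∧ (∀ l, 0 < σ l) ∧
        N * Matrix.diagonal σ = Matrix.diagonal σ * Nᵀ ∧
        (∀ k : Fin T, Hb k = U * N ^ k.val * Matrix.diagonal σ * Uᵀ) ∧
        blockHankel n d1 d2 T Hb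
          = vandStack n r d1 U N * Matrix.diagonal σ * (vandStack n r d2 U N)ᵀ := by
  have hD1 : 1 ≤ D := by
    have h1 := le_max_left d1 d2
    omega
  obtain ⟨U, σ, N, hUU, hσ, hNS, hKall⟩ := factor n D r hD1 K hpsd hrank hfirst
  have cNS : ∀ (m : ℕ) {β : Type} (X : Matrix (Fin r) β ℝ),
      Matrix.diagonal σ * ((N ^ m)ᵀ * X) = N ^ m * (Matrix.diagonal σ * X) := by
    intro m
    induction m with
    | zero => intro β X; simp
    | succ m ih =>
      intro β X
      rw [pow_succ, Matrix.transpose_mul]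
      calc Matrix.diagonal σ * ((Nᵀ * (N ^ m)ᵀ) * X)
          = (Matrix.diagonal σ * Nᵀ) * ((N ^ m)ᵀ * X) := by simp only [Matrix.mul_assoc]
        _ = (N * Matrix.diagonal σ) * ((N ^ m)ᵀ * X) := by rw [← hNS]
        _ = N * (Matrix.diagonal σ * ((N ^ m)ᵀ * X)) := by simp only [Matrix.mul_assoc]
        _ = N * (N ^ m * (Matrix.diagonal σ * X)) := by rw [ih]
        _ = (N ^ m * N) * (Matrix.diagonal σ * X) := by
            rw [← Matrix.mul_assoc]
            congr 1
            rw [← pow_succ', ← pow_succ]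
  have hblock : ∀ i' j' : ℕ,
      U * N ^ (i' + j') * Matrix.diagonal σ * Uᵀ
        = (U * N ^ i') * Matrix.diagonal σ * (U * N ^ j')ᵀ := by
    intro i' j'
    calc U * N ^ (i' + j') * Matrix.diagonal σ * Uᵀ
        = U * ((N ^ i' * N ^ j') * (Matrix.diagonal σ * Uᵀ)) := by
          rw [pow_add]; simp only [Matrix.mul_assoc]
      _ = U * (N ^ i' * (Matrix.diagonal σ * ((N ^ j')ᵀ * Uᵀ))) := by
          rw [cNS]; simp only [Matrix.mul_assoc]
      _ = (U * N ^ i') * Matrix.diagonal σ * (U * N ^ j')ᵀ := by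
          rw [Matrix.transpose_mul]; simp only [Matrix.mul_assoc]
  have hHbK : ∀ k : Fin T, Hb k = U * N ^ k.val * Matrix.diagonal σ * Uᵀ := by
    intro k
    have hkT : k.val < 2 * D - 1 := by
      have h1 := le_max_left d1 d2
      have h2 := le_max_right d1 d2
      have h3 := k.isLt
      omega
    rw [← hext k]
    exact hKall k.val hkT
  refine ⟨U, σ, N, hUU, hσ, hNS, hHbK, ?_⟩
  ext ⟨i, a⟩ ⟨j, b⟩
  have hijT : i.val + j.val < T := by
    have h3 := i.isLt
    have h4 := j.isLt
    omega
  show (if h : i.val + j.val < T then Hb ⟨i.val + j.val, h⟩ a b else 0) = _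
  rw [dif_pos hijT, show Hb ⟨i.val + j.val, hijT⟩ a b
      = (U * N ^ (i.val + j.val) * Matrix.diagonal σ * Uᵀ) a b from
      congrFun (congrFun (hHbK ⟨i.val + j.val, hijT⟩) a) b]
  rw [hblock i.val j.val, tri_apply]
  rw [show (vandStack n r d1 U N * Matrix.diagonal σ * (vandStack n r d2 U N)ᵀ) (i, a) (j, b)
      = ∑ l, vandStack n r d1 U N (i, a) l * σ l * vandStack n r d2 U N (j, b) l from
    tri_apply _ _ _ _ _]
  rfl

end
end

section
/- Let n, d1, d2 ≥ 1 and T = d1 + d2 − 1. For every i, j ∈ [n] and t ∈ [T], the block Hankel image of the standard basis tuple satisfies ‖H(E_{i,j,t})‖_F = √(min(t, T+1−t, d1, d2)), and the operator H*H (the composition of H with its adjoint with respect to the Frobenius inner products) satisfies H*H(E_{i,j,t}) = min(t, T+1−t, d1, d2) · E_{i,j,t}. -/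
noncomputable section

open Matrix

/-- The Frobenius norm of a real matrix. -/
def frobNorm {α β : Type*} [Fintype α] [Fintype β] (M : Matrix α β ℝ) : ℝ :=
  Real.sqrt (∑ i, ∑ j, (M i j) ^ 2)

/-- The Frobenius inner product of two real matrices. -/
def frobInner {α β : Type*} [Fintype α] [Fintype β] (M N : Matrix α β ℝ) : ℝ :=
  ∑ i, ∑ j, M i j * N i j

/-- The standard basis tuple `E_{i,j,t}`: the `t`-th component is the matrix unit at `(i,j)`,
the other components vanish. -/
def Etuple (n T : ℕ) (i j : Fin n) (t : Fin T) : Fin T → Matrix (Fin n) (Fin n) ℝ :=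
  fun s => if s = t then Matrix.single i j 1 else 0

lemma count_nat (d1 d2 k : ℕ) (hk : k < d1 + d2 - 1) (h1 : 1 ≤ d1) (h2 : 1 ≤ d2) :
    ((Finset.range d1 ×ˢ Finset.range d2).filter (fun x => x.1 + x.2 = k)).card
      = min (min (k + 1) (d1 + d2 - 1 - k)) (min d1 d2) := by
  have hcard : ((Finset.range d1 ×ˢ Finset.range d2).filter (fun x => x.1 + x.2 = k)).card
      = (Finset.Ico (k + 1 - d2) (min (k + 1) d1)).card := by
    apply Finset.card_bij' (fun x _ => x.1) (fun a _ => (a, k - a))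
    · intro x hx
      simp only [Finset.mem_filter, Finset.mem_product, Finset.mem_range] at hx
      simp only [Finset.mem_Ico]
      omega
    · intro a ha
      simp only [Finset.mem_Ico] at ha
      simp only [Finset.mem_filter, Finset.mem_product, Finset.mem_range]
      omega
    · intro x hx
      simp only [Finset.mem_filter, Finset.mem_product, Finset.mem_range] at hx
      ext <;> simp <;> omega
    · intro a ha; rfl
  rw [hcard, Nat.card_Ico]
  omega

lemma bh_entry (n d1 d2 T : ℕ) (i j : Fin n) (t : Fin T) (p : Fin d1 × Fin n)
    (q : Fin d2 × Fin n) :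
    blockHankel n d1 d2 T (Etuple n T i j t) p q
      = if p.1.val + q.1.val = t.val ∧ p.2 = i ∧ q.2 = j then 1 else 0 := by
  unfold blockHankel Etuple
  simp only [Matrix.of_apply]
  by_cases h : p.1.val + q.1.val < T
  · rw [dif_pos h]
    by_cases he : (⟨p.1.val + q.1.val, h⟩ : Fin T) = t
    · have hv : p.1.val + q.1.val = t.val := by rw [← he]
      rw [if_pos he]
      simp [Matrix.single, hv, @eq_comm _ i, @eq_comm _ j]
    · have hv : ¬ (p.1.val + q.1.val = t.val) := by
        intro hc; exact he (Fin.ext hc)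
      rw [if_neg he]
      simp [hv]
  · rw [dif_neg h]
    have : ¬ (p.1.val + q.1.val = t.val) := by
      intro hc; exact h (hc ▸ t.isLt)
    simp [this]

lemma frob_bh (n d1 d2 T : ℕ) (a b i j : Fin n) (s t : Fin T) :
    frobInner (blockHankel n d1 d2 T (Etuple n T a b s))
        (blockHankel n d1 d2 T (Etuple n T i j t))
      = if s = t ∧ a = i ∧ b = j
        then (((Finset.range d1 ×ˢ Finset.range d2).filter
            (fun x => x.1 + x.2 = t.val)).card : ℝ)
        else 0 := by
  unfold frobInner
  simp only [bh_entry]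
  by_cases hst : s = t ∧ a = i ∧ b = j
  · obtain ⟨h1, h2, h3⟩ := hst
    subst h1; subst h2; subst h3
    rw [if_pos ⟨rfl, rfl, rfl⟩]
    have sq : ∀ (c : Prop) [Decidable c],
        (if c then (1:ℝ) else 0) * (if c then (1:ℝ) else 0) = if c then (1:ℝ) else 0 := by
      intro c _; split <;> simp
    simp only [sq]
    rw [← Finset.sum_product']
    rw [Finset.sum_boole]
    norm_num
    refine Finset.card_bij' (fun x _ => (x.1.1.val, x.2.1.val))
      (fun y hy => ((⟨y.1, by
          simp only [Finset.mem_filter, Finset.mem_product, Finset.mem_range] at hy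
          exact hy.1.1⟩, a),
        (⟨y.2, by
          simp only [Finset.mem_filter, Finset.mem_product, Finset.mem_range] at hy
          exact hy.1.2⟩, b))) ?_ ?_ ?_ ?_
    · intro x hx
      simp only [Finset.mem_filter, Finset.mem_product, Finset.mem_univ, true_and] at hx
      simp only [Finset.mem_filter, Finset.mem_product, Finset.mem_range]
      exact ⟨⟨x.1.1.isLt, x.2.1.isLt⟩, hx.1⟩
    · intro y hy
      simp only [Finset.mem_filter, Finset.mem_product, Finset.mem_range] at hy
      simp [hy.2]
    · intro x hx
      simp only [Finset.mem_filter, Finset.mem_product, Finset.mem_univ, true_and] at hx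
      obtain ⟨-, h2, h3⟩ := hx
      ext <;> simp [h2, h3]
    · intro y hy; rfl
  · rw [if_neg hst]
    apply Finset.sum_eq_zero; intro p _
    apply Finset.sum_eq_zero; intro q _
    by_cases h1 : p.1.val + q.1.val = s.val ∧ p.2 = a ∧ q.2 = b
    · by_cases h2 : p.1.val + q.1.val = t.val ∧ p.2 = i ∧ q.2 = j
      · exfalso
        have hv : s.val = t.val := by omega
        exact hst ⟨Fin.ext hv, h1.2.1 ▸ h2.2.1, h1.2.2 ▸ h2.2.2⟩
      · simp [h2]
    · simp [h1]

lemma frobInner_std {n : ℕ} (a b : Fin n) (Y : Matrix (Fin n) (Fin n) ℝ) :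
    frobInner (Matrix.single a b 1) Y = Y a b := by
  unfold frobInner
  simp [Matrix.single, ite_and, ite_mul, one_mul, zero_mul,
    Finset.sum_ite_eq, Finset.mem_univ]


/-- `‖H(E_{i,j,t})‖_F = √(min(t, T+1−t, d1, d2))` (with `t` 1-based), and the operator
`H*H` (with `H*` the adjoint of the block Hankel operator with respect to the Frobenius
inner products) satisfies `H*H(E_{i,j,t}) = min(t, T+1−t, d1, d2)·E_{i,j,t}`. -/
theorem blockHankel_Etuple_norm_and_adjoint (n d1 d2 T : ℕ) (hn : 1 ≤ n) (hd1 : 1 ≤ d1)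
    (hd2 : 1 ≤ d2) (hT : T = d1 + d2 - 1)
    (Hadj : Matrix (Fin d1 × Fin n) (Fin d2 × Fin n) ℝ → (Fin T → Matrix (Fin n) (Fin n) ℝ))
    (hHadj : ∀ (X : Fin T → Matrix (Fin n) (Fin n) ℝ)
        (M : Matrix (Fin d1 × Fin n) (Fin d2 × Fin n) ℝ),
        frobInner (blockHankel n d1 d2 T X) M = ∑ t, frobInner (X t) (Hadj M t))
    (i j : Fin n) (t : Fin T) :
    frobNorm (blockHankel n d1 d2 T (Etuple n T i j t))
        = Real.sqrt ((min (min (t.val + 1) (T - t.val)) (min d1 d2) : ℕ) : ℝ) ∧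
      Hadj (blockHankel n d1 d2 T (Etuple n T i j t))
        = ((min (min (t.val + 1) (T - t.val)) (min d1 d2) : ℕ) : ℝ) • Etuple n T i j t := by
  have hk : t.val < T := t.isLt
  have hcardn : ((Finset.range d1 ×ˢ Finset.range d2).filter
      (fun x => x.1 + x.2 = t.val)).card
      = min (min (t.val + 1) (T - t.val)) (min d1 d2) := by
    subst hT
    exact count_nat d1 d2 t.val hk hd1 hd2
  constructor
  · have h1 : (∑ p, ∑ q, (blockHankel n d1 d2 T (Etuple n T i j t) p q) ^ 2)
        = frobInner (blockHankel n d1 d2 T (Etuple n T i j t))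
            (blockHankel n d1 d2 T (Etuple n T i j t)) := by
      unfold frobInner
      refine Finset.sum_congr rfl fun p _ => Finset.sum_congr rfl fun q _ => ?_
      ring
    unfold frobNorm
    rw [h1, frob_bh, if_pos ⟨rfl, rfl, rfl⟩, hcardn]
  · funext s
    ext a b
    have hval : Hadj (blockHankel n d1 d2 T (Etuple n T i j t)) s a b
        = frobInner (blockHankel n d1 d2 T (Etuple n T a b s))
            (blockHankel n d1 d2 T (Etuple n T i j t)) := by
      rw [hHadj]
      have hterm : ∀ u, frobInner (Etuple n T a b s u)
          (Hadj (blockHankel n d1 d2 T (Etuple n T i j t)) u)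
          = if u = s then Hadj (blockHankel n d1 d2 T (Etuple n T i j t)) s a b else 0 := by
        intro u
        unfold Etuple
        by_cases hu : u = s
        · subst hu
          rw [if_pos rfl, if_pos rfl, frobInner_std]
        · rw [if_neg hu, if_neg hu]
          simp [frobInner]
      rw [Finset.sum_congr rfl fun u _ => hterm u]
      simp
    rw [hval, frob_bh]
    simp only [Pi.smul_apply, Matrix.smul_apply, smul_eq_mul]
    have hE : Etuple n T i j t s a b = if s = t ∧ a = i ∧ b = j then (1:ℝ) else 0 := by
      unfold Etuple
      by_cases h1 : s = t
      · rw [if_pos h1]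
        simp [Matrix.single, h1, @eq_comm _ i, @eq_comm _ j]
      · rw [if_neg h1]
        simp [h1]
    rw [hE]
    by_cases hc : s = t ∧ a = i ∧ b = j
    · rw [if_pos hc, if_pos hc, mul_one, hcardn]
    · rw [if_neg hc, if_neg hc, mul_zero]


end
end

section
/- Let n ≥ 1, d1, d2 ≥ 1 and T = d1 + d2 − 1. Let A = Σ_{ℓ=1}^r λ_ℓ u_ℓ u_ℓ* = UΛU* be a positive semidefinite real n×n matrix with r positive eigenvalues λ_1,…,λ_r and corresponding orthonormal eigenvectors u_1,…,u_r, where Λ = diag(λ_1,…,λ_r) and U = [u_1 … u_r]. For m ≥ 1 define V_m(U,Λ) as the (n·m)×r matrix obtained by stacking the blocks UΛ^0, UΛ^1, …, UΛ^{m−1}, and define the diagonal r×r matrix Λ̄^m = diag(√(Σ_{s=0}^{m−1} λ_ℓ^{2s}))_{ℓ=1}^r. Set U_H = V_{d1}(U,Λ)(Λ̄^{d1})^{−1}, V_H = V_{d2}(U,Λ)(Λ̄^{d2})^{−1}, and D = Λ̄^{d1}·Λ·Λ̄^{d2}. Then H(Q_T(A)) = U_H D V_H*, U_H*U_H = I_r,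 and V_H*V_H = I_r; in particular, the nonzero singular values of H(Q_T(A)) are λ_ℓ·√(Σ_{t=0}^{d1−1} λ_ℓ^{2t})·√(Σ_{t=0}^{d2−1} λ_ℓ^{2t}) for ℓ = 1,…,r. -/
noncomputable section

open Matrix

/-- `Q_T(A) = (A, A², …, A^T)`. -/
def QT (n T : ℕ) (A : Matrix (Fin n) (Fin n) ℝ) : Fin T → Matrix (Fin n) (Fin n) ℝ :=
  fun t => A ^ (t.val + 1)

section Helpers

variable {n r : ℕ}

lemma vandStack_apply (lam : Fin r → ℝ) (U : Matrix (Fin n) (Fin r) ℝ)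
    (m : ℕ) (p : Fin m × Fin n) (l : Fin r) :
    vandStack n r m U (Matrix.diagonal lam) p l = U p.2 l * lam l ^ p.1.val := by
  simp [vandStack, Matrix.diagonal_pow, Matrix.mul_diagonal]

lemma A_pow (lam : Fin r → ℝ) (U : Matrix (Fin n) (Fin r) ℝ) (hU : Uᵀ * U = 1) (k : ℕ) :
    (U * Matrix.diagonal lam * Uᵀ) ^ (k + 1)
      = U * Matrix.diagonal (fun l => lam l ^ (k + 1)) * Uᵀ := by
  induction k with
  | zero => simp
  | succ k ih =>
    rw [pow_succ, ih]
    simp only [Matrix.mul_assoc, ← Matrix.mul_assoc Uᵀ U, hU, Matrix.one_mul]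
    rw [← Matrix.mul_assoc (Matrix.diagonal _) (Matrix.diagonal lam),
      Matrix.diagonal_mul_diagonal, ← Matrix.mul_assoc, ← Matrix.mul_assoc]
    congr 2

lemma vand_gram (lam : Fin r → ℝ) (U : Matrix (Fin n) (Fin r) ℝ) (hU : Uᵀ * U = 1) (m : ℕ) :
    (vandStack n r m U (Matrix.diagonal lam))ᵀ * vandStack n r m U (Matrix.diagonal lam)
      = Matrix.diagonal (fun l => ∑ s ∈ Finset.range m, lam l ^ (2 * s)) := by
  have hUe : ∀ l l' : Fin r, (∑ p, U p l * U p l') = if l = l' then 1 else 0 := by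
    intro l l'
    have := congrFun (congrFun hU l) l'
    simpa [Matrix.mul_apply, Matrix.transpose_apply, Matrix.one_apply] using this
  ext l l'
  rw [Matrix.mul_apply]
  rw [Fintype.sum_prod_type]
  simp only [Matrix.transpose_apply, vandStack_apply]
  have : ∀ i : Fin m, (∑ p : Fin n, U p l * lam l ^ i.val * (U p l' * lam l' ^ i.val))
      = (lam l ^ i.val * lam l' ^ i.val) * if l = l' then 1 else 0 := by
    intro i
    rw [← hUe l l', Finset.mul_sum]
    exact Finset.sum_congr rfl fun p _ => by ring
  rw [Finset.sum_congr rfl fun i _ => this i]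
  by_cases h : l = l'
  · subst h
    rw [Matrix.diagonal_apply_eq, Finset.sum_range fun s => lam l ^ (2 * s)]
    exact Finset.sum_congr rfl fun i _ => by simp [two_mul, pow_add]
  · simp [Matrix.diagonal_apply_ne _ h, h]

lemma ortho (lam : Fin r → ℝ) (hlam : ∀ l, 0 < lam l)
    (U : Matrix (Fin n) (Fin r) ℝ) (hU : Uᵀ * U = 1) (m : ℕ) (hm : 1 ≤ m) :
    (vandStack n r m U (Matrix.diagonal lam) *
      Matrix.diagonal (fun l => (Real.sqrt (∑ s ∈ Finset.range m, lam l ^ (2 * s)))⁻¹))ᵀ *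
    (vandStack n r m U (Matrix.diagonal lam) *
      Matrix.diagonal (fun l => (Real.sqrt (∑ s ∈ Finset.range m, lam l ^ (2 * s)))⁻¹)) = 1 := by
  rw [Matrix.transpose_mul, Matrix.diagonal_transpose, Matrix.mul_assoc,
    ← Matrix.mul_assoc (vandStack n r m U (Matrix.diagonal lam))ᵀ, vand_gram lam U hU m,
    Matrix.diagonal_mul_diagonal, Matrix.diagonal_mul_diagonal]
  have key : ∀ l : Fin r, (Real.sqrt (∑ s ∈ Finset.range m, lam l ^ (2 * s)))⁻¹ *
      ((∑ s ∈ Finset.range m, lam l ^ (2 * s)) *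
        (Real.sqrt (∑ s ∈ Finset.range m, lam l ^ (2 * s)))⁻¹) = 1 := by
    intro l
    have hS : 0 < ∑ s ∈ Finset.range m, lam l ^ (2 * s) :=
      Finset.sum_pos (fun s _ => pow_pos (hlam l) _) (Finset.nonempty_range_iff.mpr (by omega))
    have hs : Real.sqrt (∑ s ∈ Finset.range m, lam l ^ (2 * s)) ≠ 0 :=
      ne_of_gt (Real.sqrt_pos.mpr hS)
    rw [← Real.mul_self_sqrt hS.le]
    field_simp
    rw [Real.sqrt_sq (Real.sqrt_nonneg _)]
  simp only [key, Matrix.diagonal_one]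

lemma hankel_factor (n d1 d2 T r : ℕ) (hd1 : 1 ≤ d1) (hd2 : 1 ≤ d2)
    (hT : T = d1 + d2 - 1)
    (lam : Fin r → ℝ) (hlam : ∀ l, 0 < lam l)
    (U : Matrix (Fin n) (Fin r) ℝ) (hU : Uᵀ * U = 1) :
    blockHankel n d1 d2 T (QT n T (U * Matrix.diagonal lam * Uᵀ)) =
      (vandStack n r d1 U (Matrix.diagonal lam) *
        Matrix.diagonal (fun l => (Real.sqrt (∑ s ∈ Finset.range d1, lam l ^ (2 * s)))⁻¹)) *
      (Matrix.diagonal (fun l => Real.sqrt (∑ s ∈ Finset.range d1, lam l ^ (2 * s))) *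
        Matrix.diagonal lam *
        Matrix.diagonal (fun l => Real.sqrt (∑ s ∈ Finset.range d2, lam l ^ (2 * s)))) *
      (vandStack n r d2 U (Matrix.diagonal lam) *
        Matrix.diagonal (fun l => (Real.sqrt (∑ s ∈ Finset.range d2, lam l ^ (2 * s)))⁻¹))ᵀ := by
  ext ⟨i, p⟩ ⟨j, q⟩
  have hij : i.val + j.val < T := by
    have := i.isLt; have := j.isLt; omega
  have lhs_eq : blockHankel n d1 d2 T (QT n T (U * Matrix.diagonal lam * Uᵀ)) (i, p) (j, q)
      = (U * Matrix.diagonal (fun l => lam l ^ (i.val + j.val + 1)) * Uᵀ) p q := by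
    rw [blockHankel]
    simp only [Matrix.of_apply, dif_pos hij, QT]
    rw [A_pow lam U hU]
  rw [lhs_eq]
  simp only [Matrix.mul_apply, Matrix.mul_diagonal, Matrix.transpose_apply,
    Matrix.diagonal_mul_diagonal, vandStack_apply, Pi.mul_apply, Matrix.diagonal_apply,
    ite_mul, mul_ite, mul_zero, zero_mul, Finset.sum_ite_eq, Finset.sum_ite_eq',
    Finset.mem_univ, if_true]
  refine Finset.sum_congr rfl fun l _ => ?_
  have hS1 : 0 < ∑ s ∈ Finset.range d1, lam l ^ (2 * s) :=
    Finset.sum_pos (fun s _ => pow_pos (hlam l) _) (Finset.nonempty_range_iff.mpr (by omega))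
  have hS2 : 0 < ∑ s ∈ Finset.range d2, lam l ^ (2 * s) :=
    Finset.sum_pos (fun s _ => pow_pos (hlam l) _) (Finset.nonempty_range_iff.mpr (by omega))
  have hs1 : Real.sqrt (∑ s ∈ Finset.range d1, lam l ^ (2 * s)) ≠ 0 :=
    ne_of_gt (Real.sqrt_pos.mpr hS1)
  have hs2 : Real.sqrt (∑ s ∈ Finset.range d2, lam l ^ (2 * s)) ≠ 0 :=
    ne_of_gt (Real.sqrt_pos.mpr hS2)
  field_simp
  ring

end Helpers

/-- For a positive semidefinite `A = UΛU*` with positive eigenvalues `λ_1,…,λ_r` and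
orthonormal eigenvectors, setting `Λ̄^m = diag(√(Σ_{s<m} λ_ℓ^{2s}))`,
`U_H = V_{d1}(U,Λ)(Λ̄^{d1})⁻¹`, `V_H = V_{d2}(U,Λ)(Λ̄^{d2})⁻¹` and
`D = Λ̄^{d1}·Λ·Λ̄^{d2}`, we get a compact SVD `H(Q_T(A)) = U_H D V_H*` with
`U_H* U_H = I` and `V_H* V_H = I`. -/
theorem blockHankel_QT_psd_svd (n d1 d2 T r : ℕ) (hn : 1 ≤ n) (hd1 : 1 ≤ d1) (hd2 : 1 ≤ d2)
    (hT : T = d1 + d2 - 1)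
    (lam : Fin r → ℝ) (hlam : ∀ l, 0 < lam l)
    (U : Matrix (Fin n) (Fin r) ℝ) (hU : Uᵀ * U = 1)
    (A : Matrix (Fin n) (Fin n) ℝ) (hA : A = U * Matrix.diagonal lam * Uᵀ) :
    letI lbar : ℕ → Matrix (Fin r) (Fin r) ℝ := fun m =>
      Matrix.diagonal fun l => Real.sqrt (∑ s ∈ Finset.range m, lam l ^ (2 * s))
    letI lbarInv : ℕ → Matrix (Fin r) (Fin r) ℝ := fun m =>
      Matrix.diagonal fun l => (Real.sqrt (∑ s ∈ Finset.range m, lam l ^ (2 * s)))⁻¹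
    letI UH := vandStack n r d1 U (Matrix.diagonal lam) * lbarInv d1
    letI VH := vandStack n r d2 U (Matrix.diagonal lam) * lbarInv d2
    letI D := lbar d1 * Matrix.diagonal lam * lbar d2
    blockHankel n d1 d2 T (QT n T A) = UH * D * VHᵀ ∧ UHᵀ * UH = 1 ∧ VHᵀ * VH = 1 := by
  subst hA
  exact ⟨hankel_factor n d1 d2 T r hd1 hd2 hT lam hlam U hU,
    ortho lam hlam U hU d1 hd1, ortho lam hlam U hU d2 hd2⟩

end
end

section
/- Let 2 ≤ d1 ≤ d2 and T = d1 + d2 − 1. Let A = UΛU* be a positive semidefinite real n×n matrix with positive eigenvalues λ_1,…,λ_r and orthonormal eigenvectors u_1,…,u_r, and let U_H = V_{d1}(U,Λ)(Λ̄^{d1})^{−1} and V_H = V_{d2}(U,Λ)(Λ̄^{d2})^{−1} be the singular vector matrices of H(Q_T(A)). Then for all i, j ∈ [n] and t ∈ [T]: ‖U_H* B_{i,j,t}‖_F² equals Σ_{ℓ=1}^r (Σ_{s=0}^{t−1} λ_ℓ^{2s})/(Σ_{s=0}^{d1−1} λ_ℓ^{2s}) · (u_ℓ)_i²/t if t < d1;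 Σ_{ℓ=1}^r (u_ℓ)_i²/d1 if d1 ≤ t ≤ d2; and Σ_{ℓ=1}^r (Σ_{s=t−d2}^{d1−1} λ_ℓ^{2s})/(Σ_{s=0}^{d1−1} λ_ℓ^{2s}) · (u_ℓ)_i²/(T+1−t) if t > d2. Likewise, ‖B_{i,j,t} V_H‖_F² equals Σ_{ℓ=1}^r (Σ_{s=0}^{t−1} λ_ℓ^{2s})/(Σ_{s=0}^{d2−1} λ_ℓ^{2s}) · (u_ℓ)_j²/t if t < d1; Σ_{ℓ=1}^r (Σ_{s=t−d1}^{t−1} λ_ℓ^{2s})/(Σ_{s=0}^{d2−1} λ_ℓ^{2s}) · (u_ℓ)_j²/d1 if d1 ≤ t ≤ d2; and Σ_{ℓ=1}^r (Σ_{s=t−d1}^{d2−1} λ_ℓ^{2s})/(Σ_{s=0}^{d2−1} λ_ℓ^{2s}) · (u_ℓ)_j²/(T+1−t) if t > d2. -/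
noncomputable section

open Matrix

/-- The normalized block Hankel basis matrix `B_{i,j,t}`. -/
def Bmat (n d1 d2 T : ℕ) (i j : Fin n) (t : Fin T) :
    Matrix (Fin d1 × Fin n) (Fin d2 × Fin n) ℝ :=
  (frobNorm (blockHankel n d1 d2 T (Etuple n T i j t)))⁻¹ •
    blockHankel n d1 d2 T (Etuple n T i j t)

lemma frob_sq {α β : Type*} [Fintype α] [Fintype β] (M : Matrix α β ℝ) :
    frobNorm M ^ 2 = ∑ i, ∑ j, (M i j) ^ 2 := by
  rw [frobNorm, Real.sq_sqrt]
  positivity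

lemma frob_transpose {α β : Type*} [Fintype α] [Fintype β] (M : Matrix α β ℝ) :
    frobNorm Mᵀ = frobNorm M := by
  rw [frobNorm, frobNorm, Finset.sum_comm]
  rfl

lemma frob_smul_sq {α β : Type*} [Fintype α] [Fintype β] (c : ℝ) (M : Matrix α β ℝ) :
    frobNorm (c • M) ^ 2 = c ^ 2 * frobNorm M ^ 2 := by
  rw [frob_sq, frob_sq, Finset.mul_sum]
  refine Finset.sum_congr rfl fun a _ => ?_
  rw [Finset.mul_sum]
  refine Finset.sum_congr rfl fun b _ => ?_
  simp [Matrix.smul_apply, mul_pow]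

lemma hankelE_apply (n d1 d2 T : ℕ) (i j : Fin n) (t : Fin T)
    (p : Fin d1) (a : Fin n) (q : Fin d2) (b : Fin n) :
    blockHankel n d1 d2 T (Etuple n T i j t) (p, a) (q, b)
      = if p.val + q.val = t.val ∧ a = i ∧ b = j then 1 else 0 := by
  unfold blockHankel Etuple
  by_cases hpq : p.val + q.val = t.val
  · have hlt : p.val + q.val < T := hpq ▸ t.isLt
    have he : (⟨p.val + q.val, hlt⟩ : Fin T) = t := Fin.ext hpq
    simp only [Matrix.of_apply, dif_pos hlt, if_pos he, hpq, true_and,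
      Matrix.single]
    have hiff : (i = a ∧ j = b) ↔ (a = i ∧ b = j) :=
      ⟨fun h => ⟨h.1.symm, h.2.symm⟩, fun h => ⟨h.1.symm, h.2.symm⟩⟩
    simp [hiff]
  · have hne : ¬(p.val + q.val = t.val ∧ a = i ∧ b = j) := fun hc => hpq hc.1
    simp only [Matrix.of_apply]
    rw [if_neg hne]
    split_ifs with h h2
    · exact absurd (by simpa [Fin.ext_iff] using h2) hpq
    · rfl
    · rfl

lemma hankelE_transpose (n d1 d2 T : ℕ) (i j : Fin n) (t : Fin T) :
    (blockHankel n d1 d2 T (Etuple n T i j t))ᵀ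
      = blockHankel n d2 d1 T (Etuple n T j i t) := by
  ext ⟨q, b⟩ ⟨p, a⟩
  rw [Matrix.transpose_apply, hankelE_apply, hankelE_apply]
  by_cases h : p.val + q.val = t.val ∧ a = i ∧ b = j
  · rw [if_pos h, if_pos ⟨by omega, h.2.2, h.2.1⟩]
  · rw [if_neg h, if_neg fun hc => h ⟨by omega, hc.2.2, hc.2.1⟩]

lemma Bmat_transpose (n d1 d2 T : ℕ) (i j : Fin n) (t : Fin T) :
    (Bmat n d1 d2 T i j t)ᵀ = Bmat n d2 d1 T j i t := by
  rw [Bmat, Bmat, Matrix.transpose_smul, hankelE_transpose]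
  congr 2
  rw [← hankelE_transpose, frob_transpose]

lemma sum_fin_indicator (d : ℕ) (S : Finset ℕ) (hS : ∀ k ∈ S, k < d) (f : ℕ → ℝ) :
    (∑ p : Fin d, if p.val ∈ S then f p.val else 0) = ∑ k ∈ S, f k := by
  rw [Fin.sum_univ_eq_sum_range (fun k => if k ∈ S then f k else 0) d,
    Finset.sum_ite_mem]
  congr 1
  exact Finset.inter_eq_right.mpr fun k hk => Finset.mem_range.mpr (hS k hk)

lemma sum_fin_eq (d m : ℕ) (h2 : m < d) (g : Fin d → ℝ) (P : Fin d → Prop)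
    [DecidablePred P] (hP : ∀ p, P p ↔ p.val = m) :
    (∑ p : Fin d, if P p then g p else 0) = g ⟨m, h2⟩ := by
  rw [Finset.sum_eq_single (⟨m, h2⟩ : Fin d)]
  · rw [if_pos ((hP _).mpr rfl)]
  · intro q _ hne
    exact if_neg fun hc => hne (Fin.ext ((hP q).mp hc))
  · exact fun h => absurd (Finset.mem_univ _) h

lemma sum_fin_zero (d : ℕ) (g : Fin d → ℝ) (P : Fin d → Prop)
    [DecidablePred P] (hP : ∀ p, ¬ P p) :
    (∑ p : Fin d, if P p then g p else 0) = 0 :=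
  Finset.sum_eq_zero fun p _ => if_neg (hP p)

lemma pair_sum (d1 d2 τ : ℕ) (f : ℕ → ℝ) :
    (∑ p : Fin d1, ∑ q : Fin d2, if p.val + q.val = τ then f p.val else 0)
      = ∑ k ∈ Finset.Ico (τ + 1 - d2) (min (τ + 1) d1), f k := by
  have h1 : ∀ p : Fin d1,
      (∑ q : Fin d2, if p.val + q.val = τ then f p.val else 0)
        = if p.val ∈ Finset.Ico (τ + 1 - d2) (min (τ + 1) d1) then f p.val else 0 := by
    intro p
    by_cases hp : p.val ∈ Finset.Ico (τ + 1 - d2) (min (τ + 1) d1)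
    · rw [if_pos hp]
      rw [Finset.mem_Ico] at hp
      exact sum_fin_eq d2 (τ - p.val) (by omega) _ _ (fun q => by omega)
    · rw [if_neg hp]
      rw [Finset.mem_Ico] at hp
      refine sum_fin_zero d2 _ _ fun q => ?_
      have := q.isLt
      have := p.isLt
      omega
  rw [Finset.sum_congr rfl fun p _ => h1 p]
  exact sum_fin_indicator d1 _ (fun k hk => by
    rw [Finset.mem_Ico] at hk; omega) f

lemma sq_sum_unique (d τ κ : ℕ) (g : ℕ → ℝ) :
    (∑ p : Fin d, if p.val + κ = τ then g p.val else 0) ^ 2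
      = ∑ p : Fin d, if p.val + κ = τ then (g p.val) ^ 2 else 0 := by
  by_cases h : κ ≤ τ ∧ τ - κ < d
  · rw [sum_fin_eq d (τ - κ) h.2 _ _ (fun p => by omega),
      sum_fin_eq d (τ - κ) h.2 _ _ (fun p => by omega)]
  · rw [sum_fin_zero d _ _ (fun p => by have := p.isLt; omega),
      sum_fin_zero d _ _ (fun p => by have := p.isLt; omega)]
    norm_num

lemma master' (n d1 d2 T r : ℕ)
    (lam : Fin r → ℝ) (U : Matrix (Fin n) (Fin r) ℝ) (g : Fin r → ℝ)
    (i j : Fin n) (t : Fin T) :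
    frobNorm ((vandStack n r d1 U (Matrix.diagonal lam) * Matrix.diagonal g)ᵀ *
        Bmat n d1 d2 T i j t) ^ 2
      = ((Finset.Ico (t.val + 1 - d2) (min (t.val + 1) d1)).card : ℝ)⁻¹ *
          ∑ l, (∑ k ∈ Finset.Ico (t.val + 1 - d2) (min (t.val + 1) d1), lam l ^ (2 * k))
            * (U i l * g l) ^ 2 := by
  have hWa : ∀ (p : Fin d1) (a : Fin n) (l : Fin r),
      (vandStack n r d1 U (Matrix.diagonal lam) * Matrix.diagonal g) (p, a) l
        = U a l * lam l ^ p.val * g l := by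
    intro p a l
    rw [Matrix.mul_diagonal]
    congr 1
    show (U * (Matrix.diagonal lam) ^ p.val) a l = U a l * lam l ^ p.val
    rw [Matrix.diagonal_pow, Matrix.mul_diagonal, Pi.pow_apply]
  have hin : ∀ (P : Prop) (inst : Decidable P),
      (∑ a : Fin n, ∑ b : Fin n, if P ∧ a = i ∧ b = j then (1:ℝ) else 0)
        = if P then 1 else 0 := by
    intro P inst
    by_cases hP : P
    · simp only [hP, true_and, if_true]
      rw [Finset.sum_eq_single i]
      · rw [Finset.sum_eq_single j]
        · simp
        · intro b _ hb; simp [hb]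
        · simp
      · intro a _ ha
        exact Finset.sum_eq_zero fun b _ => by simp [ha]
      · simp
    · refine Eq.trans (Finset.sum_eq_zero fun a _ => Finset.sum_eq_zero fun b _ => ?_)
        (by simp [hP])
      simp [hP]
  have hc2 : frobNorm (blockHankel n d1 d2 T (Etuple n T i j t)) ^ 2
      = (((Finset.Ico (t.val + 1 - d2) (min (t.val + 1) d1)).card : ℝ)) := by
    rw [frob_sq]
    simp_rw [Fintype.sum_prod_type, hankelE_apply, apply_ite (fun x : ℝ => x ^ 2),
      one_pow, zero_pow two_ne_zero]
    calc (∑ p : Fin d1, ∑ a : Fin n, ∑ q : Fin d2, ∑ b : Fin n,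
            if p.val + q.val = t.val ∧ a = i ∧ b = j then (1:ℝ) else 0)
        = ∑ p : Fin d1, ∑ q : Fin d2, if p.val + q.val = t.val then (1:ℝ) else 0 := by
          refine Finset.sum_congr rfl fun p _ => ?_
          rw [Finset.sum_comm]
          exact Finset.sum_congr rfl fun q _ => hin _ _
      _ = ∑ k ∈ Finset.Ico (t.val + 1 - d2) (min (t.val + 1) d1), (1:ℝ) :=
          pair_sum d1 d2 t.val (fun _ => 1)
      _ = _ := by simp
  have hM : ∀ (l : Fin r) (q : Fin d2) (b : Fin n),
      ((vandStack n r d1 U (Matrix.diagonal lam) * Matrix.diagonal g)ᵀ *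
        blockHankel n d1 d2 T (Etuple n T i j t)) l (q, b)
        = if b = j then
            (∑ p : Fin d1, if p.val + q.val = t.val then U i l * lam l ^ p.val * g l else 0)
          else 0 := by
    intro l q b
    rw [Matrix.mul_apply, Fintype.sum_prod_type]
    by_cases hb : b = j
    · rw [if_pos hb]
      refine Finset.sum_congr rfl fun p _ => ?_
      by_cases hpq : p.val + q.val = t.val
      · rw [if_pos hpq, Finset.sum_eq_single i]
        · rw [Matrix.transpose_apply, hWa p i l, hankelE_apply, if_pos ⟨hpq, rfl, hb⟩, mul_one]
        · intro a _ ha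
          rw [Matrix.transpose_apply, hankelE_apply, if_neg (fun hc => ha hc.2.1), mul_zero]
        · simp
      · rw [if_neg hpq]
        refine Finset.sum_eq_zero fun a _ => ?_
        rw [Matrix.transpose_apply, hankelE_apply, if_neg (fun hc => hpq hc.1), mul_zero]
    · rw [if_neg hb]
      refine Finset.sum_eq_zero fun p _ => Finset.sum_eq_zero fun a _ => ?_
      rw [Matrix.transpose_apply, hankelE_apply, if_neg (fun hc => hb hc.2.2), mul_zero]
  have key : frobNorm ((vandStack n r d1 U (Matrix.diagonal lam) * Matrix.diagonal g)ᵀ *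
      blockHankel n d1 d2 T (Etuple n T i j t)) ^ 2
      = ∑ l, (∑ k ∈ Finset.Ico (t.val + 1 - d2) (min (t.val + 1) d1), lam l ^ (2 * k))
          * (U i l * g l) ^ 2 := by
    rw [frob_sq]
    calc (∑ l, ∑ qb : Fin d2 × Fin n,
            ((vandStack n r d1 U (Matrix.diagonal lam) * Matrix.diagonal g)ᵀ *
              blockHankel n d1 d2 T (Etuple n T i j t)) l qb ^ 2)
        = ∑ l, ∑ q : Fin d2, ∑ b : Fin n,
            ((vandStack n r d1 U (Matrix.diagonal lam) * Matrix.diagonal g)ᵀ *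
              blockHankel n d1 d2 T (Etuple n T i j t)) l (q, b) ^ 2 := by
          exact Finset.sum_congr rfl fun l _ => Fintype.sum_prod_type _
      _ = ∑ l, ∑ q : Fin d2,
            (∑ p : Fin d1, if p.val + q.val = t.val then U i l * lam l ^ p.val * g l else 0) ^ 2 := by
          refine Finset.sum_congr rfl fun l _ => Finset.sum_congr rfl fun q _ => ?_
          rw [Finset.sum_eq_single j]
          · rw [hM l q j, if_pos rfl]
          · intro b _ hb; rw [hM l q b, if_neg hb]; norm_num
          · simp
      _ = ∑ l, ∑ q : Fin d2, ∑ p : Fin d1,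
            if p.val + q.val = t.val then (U i l * lam l ^ p.val * g l) ^ 2 else 0 := by
          refine Finset.sum_congr rfl fun l _ => Finset.sum_congr rfl fun q _ => ?_
          exact sq_sum_unique d1 t.val q.val (fun k => U i l * lam l ^ k * g l)
      _ = ∑ l, ∑ p : Fin d1, ∑ q : Fin d2,
            if p.val + q.val = t.val then (U i l * lam l ^ p.val * g l) ^ 2 else 0 :=
          Finset.sum_congr rfl fun l _ => Finset.sum_comm
      _ = ∑ l, ∑ k ∈ Finset.Ico (t.val + 1 - d2) (min (t.val + 1) d1),
            (U i l * lam l ^ k * g l) ^ 2 :=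
          Finset.sum_congr rfl fun l _ =>
            pair_sum d1 d2 t.val (fun k => (U i l * lam l ^ k * g l) ^ 2)
      _ = _ := by
          refine Finset.sum_congr rfl fun l _ => ?_
          rw [Finset.sum_mul]
          refine Finset.sum_congr rfl fun k _ => ?_
          rw [mul_comm 2 k, pow_mul]
          ring
  rw [Bmat, Matrix.mul_smul, frob_smul_sq, inv_pow, hc2, key]

lemma master (n d1 d2 T r : ℕ)
    (lam : Fin r → ℝ) (U : Matrix (Fin n) (Fin r) ℝ) (i j : Fin n) (t : Fin T) :
    frobNorm ((vandStack n r d1 U (Matrix.diagonal lam) *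
        Matrix.diagonal fun l => (Real.sqrt (∑ s ∈ Finset.range d1, lam l ^ (2 * s)))⁻¹)ᵀ *
        Bmat n d1 d2 T i j t) ^ 2
      = ((Finset.Ico (t.val + 1 - d2) (min (t.val + 1) d1)).card : ℝ)⁻¹ *
          ∑ l, (∑ k ∈ Finset.Ico (t.val + 1 - d2) (min (t.val + 1) d1), lam l ^ (2 * k))
            * (U i l) ^ 2 / (∑ s ∈ Finset.range d1, lam l ^ (2 * s)) := by
  rw [master' n d1 d2 T r lam U _ i j t]
  congr 1
  refine Finset.sum_congr rfl fun l _ => ?_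
  have hσ : (0:ℝ) ≤ ∑ s ∈ Finset.range d1, lam l ^ (2 * s) :=
    Finset.sum_nonneg fun s _ => by rw [pow_mul]; exact pow_nonneg (sq_nonneg _) s
  have h2 : ((Real.sqrt (∑ s ∈ Finset.range d1, lam l ^ (2 * s)))⁻¹) ^ 2
      = (∑ s ∈ Finset.range d1, lam l ^ (2 * s))⁻¹ := by
    rw [inv_pow, Real.sq_sqrt hσ]
  rw [mul_pow, h2, div_eq_mul_inv]
  ring

/-- Piecewise formulas for `‖U_H* B_{i,j,t}‖_F²` and `‖B_{i,j,t} V_H‖_F²` for the singular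
vector matrices `U_H`, `V_H` of `H(Q_T(A))` of a positive semidefinite transition operator
`A = UΛU*`, for `2 ≤ d1 ≤ d2` (the time index `t` below is 1-based, i.e. `τ = t.val + 1`). -/
theorem psd_basis_coherence_formulas (n d1 d2 T r : ℕ) (hn : 1 ≤ n)
    (hd1 : 2 ≤ d1) (hd12 : d1 ≤ d2) (hT : T = d1 + d2 - 1)
    (lam : Fin r → ℝ) (hlam : ∀ l, 0 < lam l)
    (U : Matrix (Fin n) (Fin r) ℝ) (hU : Uᵀ * U = 1)
    (A : Matrix (Fin n) (Fin n) ℝ) (hA : A = U * Matrix.diagonal lam * Uᵀ)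
    (i j : Fin n) (t : Fin T) :
    letI UH : Matrix (Fin d1 × Fin n) (Fin r) ℝ :=
      vandStack n r d1 U (Matrix.diagonal lam) *
        Matrix.diagonal fun l => (Real.sqrt (∑ s ∈ Finset.range d1, lam l ^ (2 * s)))⁻¹
    letI VH : Matrix (Fin d2 × Fin n) (Fin r) ℝ :=
      vandStack n r d2 U (Matrix.diagonal lam) *
        Matrix.diagonal fun l => (Real.sqrt (∑ s ∈ Finset.range d2, lam l ^ (2 * s)))⁻¹
    ((t.val + 1 < d1 →
        frobNorm (UHᵀ * Bmat n d1 d2 T i j t) ^ 2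
          = ∑ l, ((∑ s ∈ Finset.range (t.val + 1), lam l ^ (2 * s))
              / (∑ s ∈ Finset.range d1, lam l ^ (2 * s))) * (U i l) ^ 2 / ((t.val : ℝ) + 1)) ∧
      (d1 ≤ t.val + 1 → t.val + 1 ≤ d2 →
        frobNorm (UHᵀ * Bmat n d1 d2 T i j t) ^ 2
          = ∑ l, (U i l) ^ 2 / (d1 : ℝ)) ∧
      (d2 < t.val + 1 →
        frobNorm (UHᵀ * Bmat n d1 d2 T i j t) ^ 2
          = ∑ l, ((∑ s ∈ Finset.Ico (t.val + 1 - d2) d1, lam l ^ (2 * s))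
              / (∑ s ∈ Finset.range d1, lam l ^ (2 * s))) * (U i l) ^ 2
                / ((T : ℝ) - (t.val : ℝ)))) ∧
    ((t.val + 1 < d1 →
        frobNorm (Bmat n d1 d2 T i j t * VH) ^ 2
          = ∑ l, ((∑ s ∈ Finset.range (t.val + 1), lam l ^ (2 * s))
              / (∑ s ∈ Finset.range d2, lam l ^ (2 * s))) * (U j l) ^ 2 / ((t.val : ℝ) + 1)) ∧
      (d1 ≤ t.val + 1 → t.val + 1 ≤ d2 →
        frobNorm (Bmat n d1 d2 T i j t * VH) ^ 2
          = ∑ l, ((∑ s ∈ Finset.Ico (t.val + 1 - d1) (t.val + 1), lam l ^ (2 * s))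
              / (∑ s ∈ Finset.range d2, lam l ^ (2 * s))) * (U j l) ^ 2 / (d1 : ℝ)) ∧
      (d2 < t.val + 1 →
        frobNorm (Bmat n d1 d2 T i j t * VH) ^ 2
          = ∑ l, ((∑ s ∈ Finset.Ico (t.val + 1 - d1) d2, lam l ^ (2 * s))
              / (∑ s ∈ Finset.range d2, lam l ^ (2 * s))) * (U j l) ^ 2
                / ((T : ℝ) - (t.val : ℝ)))) := by
  have hτ : t.val < T := t.isLt
  have hσ1 : ∀ l, (0:ℝ) < ∑ s ∈ Finset.range d1, lam l ^ (2 * s) := by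
    intro l
    refine Finset.sum_pos' (fun s _ => by rw [pow_mul]; exact pow_nonneg (sq_nonneg _) s)
      ⟨0, Finset.mem_range.mpr (by omega), by simp⟩
  have hσ2 : ∀ l, (0:ℝ) < ∑ s ∈ Finset.range d2, lam l ^ (2 * s) := by
    intro l
    refine Finset.sum_pos' (fun s _ => by rw [pow_mul]; exact pow_nonneg (sq_nonneg _) s)
      ⟨0, Finset.mem_range.mpr (by omega), by simp⟩
  have hd1R : ((d1:ℝ)) ≠ 0 := Nat.cast_ne_zero.mpr (by omega)
  constructor
  · refine ⟨fun h1 => ?_, fun h2a h2b => ?_, fun h3 => ?_⟩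
    · rw [master n d1 d2 T r lam U i j t]
      have hs : Finset.Ico (t.val + 1 - d2) (min (t.val + 1) d1) = Finset.range (t.val + 1) := by
        rw [Finset.range_eq_Ico]; congr 1 <;> omega
      rw [hs, Finset.card_range, Finset.mul_sum]
      refine Finset.sum_congr rfl fun l _ => ?_
      push_cast
      ring
    · rw [master n d1 d2 T r lam U i j t]
      have hs : Finset.Ico (t.val + 1 - d2) (min (t.val + 1) d1) = Finset.range d1 := by
        rw [Finset.range_eq_Ico]; congr 1 <;> omega
      rw [hs, Finset.card_range, Finset.mul_sum]
      refine Finset.sum_congr rfl fun l _ => ?_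
      have h := (hσ1 l).ne'
      field_simp
    · rw [master n d1 d2 T r lam U i j t]
      have hs : min (t.val + 1) d1 = d1 := by omega
      rw [hs]
      have hc : (((Finset.Ico (t.val + 1 - d2) d1).card : ℕ) : ℝ) = (T : ℝ) - t.val := by
        rw [Nat.card_Ico]
        have h4 : d1 - (t.val + 1 - d2) = T - t.val := by omega
        rw [h4, Nat.cast_sub (le_of_lt hτ)]
      rw [hc, Finset.mul_sum]
      refine Finset.sum_congr rfl fun l _ => ?_
      ring
  · refine ⟨fun h1 => ?_, fun h2a h2b => ?_, fun h3 => ?_⟩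
    · rw [← frob_transpose, Matrix.transpose_mul, Bmat_transpose,
        master n d2 d1 T r lam U j i t]
      have hs : Finset.Ico (t.val + 1 - d1) (min (t.val + 1) d2) = Finset.range (t.val + 1) := by
        rw [Finset.range_eq_Ico]; congr 1 <;> omega
      rw [hs, Finset.card_range, Finset.mul_sum]
      refine Finset.sum_congr rfl fun l _ => ?_
      push_cast
      ring
    · rw [← frob_transpose, Matrix.transpose_mul, Bmat_transpose,
        master n d2 d1 T r lam U j i t]
      have hs : min (t.val + 1) d2 = t.val + 1 := by omega
      rw [hs]
      have hc : (((Finset.Ico (t.val + 1 - d1) (t.val + 1)).card : ℕ) : ℝ) = (d1 : ℝ) := by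
        rw [Nat.card_Ico]
        have h4 : t.val + 1 - (t.val + 1 - d1) = d1 := by omega
        rw [h4]
      rw [hc, Finset.mul_sum]
      refine Finset.sum_congr rfl fun l _ => ?_
      ring
    · rw [← frob_transpose, Matrix.transpose_mul, Bmat_transpose,
        master n d2 d1 T r lam U j i t]
      have hs : min (t.val + 1) d2 = d2 := by omega
      rw [hs]
      have hc : (((Finset.Ico (t.val + 1 - d1) d2).card : ℕ) : ℝ) = (T : ℝ) - t.val := by
        rw [Nat.card_Ico]
        have h4 : d2 - (t.val + 1 - d1) = T - t.val := by omega
        rw [h4, Nat.cast_sub (le_of_lt hτ)]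
      rw [hc, Finset.mul_sum]
      refine Finset.sum_congr rfl fun l _ => ?_
      ring

end
end

section
/- Let d1 = d2 ≥ 2, T = d1 + d2 − 1 ≥ 3, and c_s = T(T+1)/(d1·d2). Let A = UΛU* be a positive semidefinite real n×n matrix with eigenvalues 0 < λ_r ≤ … ≤ λ_1 ≤ 1 and orthonormal eigenvectors u_1,…,u_r, and let H_A = H(Q_T(A)). Then H_A is μ0-incoherent with μ0 ≤ max_{1≤i≤n} Σ_{ℓ=1}^r n·d2·(u_ℓ)_i² / (r·Σ_{s=0}^{d2−1} λ_ℓ^{2s}); that is, for every i, j ∈ [n] and t ∈ [T], ‖P_{T_{H_A}}(B_{i,j,t})‖_F² ≤ (c_s·r/(n·T)) · max_{1≤i'≤n} Σ_{ℓ=1}^r n·d2·(u_ℓ)_{i'}² / (r·Σ_{s=0}^{d2−1} λ_ℓ^{2s}). -/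
noncomputable section

open Matrix

/-- The orthogonal projection onto the tangent space. -/
def tanProj {α β : Type*} [Fintype α] [Fintype β] {r : ℕ}
    (U : Matrix α (Fin r) ℝ) (V : Matrix β (Fin r) ℝ) (M : Matrix α β ℝ) : Matrix α β ℝ :=
  U * Uᵀ * M + M * (V * Vᵀ) - U * Uᵀ * M * (V * Vᵀ)

private lemma sum_sq_eq_trace' {α : Type*} [Fintype α] (N : Matrix α α ℝ) :
    ∑ i, ∑ j, (N i j)^2 = (N * Nᵀ).trace := by
  simp [Matrix.trace, Matrix.mul_apply, Matrix.diag, sq]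

private lemma trace_self_transpose_nonneg' {α : Type*} [Fintype α] (N : Matrix α α ℝ) :
    0 ≤ (N * Nᵀ).trace := by rw [← sum_sq_eq_trace']; positivity

private lemma proj_expand' {α : Type*} [Fintype α] (P M : Matrix α α ℝ)
    (hP : P * P = P) (hPt : Pᵀ = P) :
    ((P*M + M*P - P*M*P) * (P*M + M*P - P*M*P)ᵀ).trace
    = (M*Mᵀ*P).trace + (Mᵀ*M*P).trace - ((P*M*P) * (P*M*P)ᵀ).trace := by
  have hPP : ∀ N : Matrix α α ℝ, P * (P * N) = P * N := fun N => by
    rw [← Matrix.mul_assoc, hP]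
  simp only [transpose_add, transpose_sub, transpose_mul, hPt, add_mul, mul_add, sub_mul,
    mul_sub, trace_add, trace_sub, Matrix.mul_assoc, hPP]
  have ha : (P * (M * (Mᵀ * P))).trace = (M * (Mᵀ * P)).trace := by
    rw [trace_mul_comm, Matrix.mul_assoc, Matrix.mul_assoc, hP]
  have hf : (M * (P * Mᵀ)).trace = (Mᵀ * (M * P)).trace := by
    rw [trace_mul_comm, Matrix.mul_assoc, trace_mul_comm P, ← Matrix.mul_assoc]
  rw [ha, hf]; ring

private lemma transpose_stdBasisMatrix' {α β : Type*} [DecidableEq α] [DecidableEq β]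
    (x : α) (y : β) (c : ℝ) :
    (Matrix.single x y c)ᵀ = Matrix.single y x c := by
  ext a b
  simp [Matrix.single, Matrix.transpose_apply, and_comm]

private lemma trace_stdBasisMatrix_mul' {α : Type*} [Fintype α] [DecidableEq α]
    (x y : α) (N : Matrix α α ℝ) :
    (Matrix.single x y (1:ℝ) * N).trace = N y x := by
  simp [Matrix.trace, Matrix.diag, Matrix.mul_apply, Matrix.single, ite_and,
    Finset.sum_ite_eq]

set_option maxHeartbeats 2000000 in
/-- For `d1 = d2 = d ≥ 2`, `T = 2d − 1 ≥ 3` and a positive semidefinite `A = UΛU*` with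
eigenvalues `0 < λ_r ≤ … ≤ λ_1 ≤ 1`, the block Hankel matrix `H_A = H(Q_T(A))` is
`μ0`-incoherent with `μ0 ≤ max_i Σ_ℓ n d (u_ℓ)_i²/(r Σ_{s<d} λ_ℓ^{2s})`: for every `(i,j,t)`,
`‖P_{T_{H_A}}(B_{i,j,t})‖_F² ≤ (c_s r/(nT)) · max_{i'} Σ_ℓ n d (u_ℓ)_{i'}²/(r Σ_{s<d} λ_ℓ^{2s})`. -/
theorem psd_incoherence_bound (n d T r : ℕ) (hn : 1 ≤ n) (hr : 1 ≤ r) (hd : 2 ≤ d)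
    (hT : T = d + d - 1)
    (lam : Fin r → ℝ) (hlam : ∀ l, 0 < lam l) (hlam1 : ∀ l, lam l ≤ 1)
    (hmono : ∀ k l : Fin r, k ≤ l → lam l ≤ lam k)
    (U : Matrix (Fin n) (Fin r) ℝ) (hU : Uᵀ * U = 1)
    (A : Matrix (Fin n) (Fin n) ℝ) (hA : A = U * Matrix.diagonal lam * Uᵀ)
    (i j : Fin n) (t : Fin T) :
    letI UH : Matrix (Fin d × Fin n) (Fin r) ℝ :=
      vandStack n r d U (Matrix.diagonal lam) *
        Matrix.diagonal fun l => (Real.sqrt (∑ s ∈ Finset.range d, lam l ^ (2 * s)))⁻¹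
    frobNorm (tanProj UH UH (Bmat n d d T i j t)) ^ 2
      ≤ ((T : ℝ) * ((T : ℝ) + 1) / ((d : ℝ) * (d : ℝ))) * (r : ℝ) / ((n : ℝ) * (T : ℝ))
        * (⨆ i' : Fin n, ∑ l, (n : ℝ) * (d : ℝ) * (U i' l) ^ 2
            / ((r : ℝ) * ∑ s ∈ Finset.range d, lam l ^ (2 * s))) := by
  set S0 : Fin r → ℝ := fun l => ∑ s ∈ Finset.range d, lam l ^ (2 * s) with hS0
  set gg : Fin r → ℝ := fun l => (Real.sqrt (S0 l))⁻¹ with hgg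
  set W : Matrix (Fin d × Fin n) (Fin r) ℝ := vandStack n r d U (Matrix.diagonal lam) with hWdef
  set UH : Matrix (Fin d × Fin n) (Fin r) ℝ := W * Matrix.diagonal gg with hUHdef
  -- basic positivity
  have hS0pos : ∀ l, 0 < S0 l := fun l =>
    Finset.sum_pos (fun s _ => pow_pos (hlam l) _) ⟨0, Finset.mem_range.mpr (by omega)⟩
  -- entries of the Vandermonde stack
  have hWapp : ∀ (p : Fin d) (a : Fin n) (l : Fin r),
      W (p, a) l = U a l * lam l ^ (p.val) := by
    intro p a l
    simp [hWdef, vandStack, Matrix.diagonal_pow, Matrix.mul_diagonal, Pi.pow_apply]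
  -- orthonormality of UH
  have hWW : Wᵀ * W = Matrix.diagonal S0 := by
    ext k l
    have hU' : ∑ a, U a k * U a l = if k = l then (1:ℝ) else 0 := by
      have := congrFun (congrFun hU k) l
      simpa [Matrix.mul_apply, Matrix.one_apply] using this
    simp only [Matrix.mul_apply, Matrix.transpose_apply]
    rw [Fintype.sum_prod_type]
    calc ∑ p : Fin d, ∑ a : Fin n, W (p,a) k * W (p,a) l
        = ∑ p : Fin d, (lam k ^ p.val * lam l ^ p.val) * ∑ a, U a k * U a l := by
          refine Finset.sum_congr rfl fun p _ => ?_
          rw [Finset.mul_sum]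
          refine Finset.sum_congr rfl fun a _ => ?_
          rw [hWapp, hWapp]; ring
      _ = Matrix.diagonal S0 k l := by
          rw [hU']
          by_cases h : k = l
          · subst h
            simp only [if_true, eq_self_iff_true, mul_one, Matrix.diagonal_apply_eq, hS0]
            rw [Fin.sum_univ_eq_sum_range (fun p => lam k ^ p * lam k ^ p)]
            refine Finset.sum_congr rfl fun s _ => ?_
            rw [← pow_add, two_mul]
          · simp [Matrix.diagonal_apply_ne _ h, h]
  have hUHorth : UHᵀ * UH = 1 := by
    rw [hUHdef, Matrix.transpose_mul, Matrix.diagonal_transpose, Matrix.mul_assoc,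
      ← Matrix.mul_assoc Wᵀ, hWW, Matrix.diagonal_mul_diagonal, Matrix.diagonal_mul_diagonal]
    have hone : ∀ l, gg l * (S0 l * gg l) = 1 := by
      intro l
      rw [hgg]
      have h1 : Real.sqrt (S0 l) ≠ 0 := ne_of_gt (Real.sqrt_pos.mpr (hS0pos l))
      rw [← Real.mul_self_sqrt (le_of_lt (hS0pos l))]
      field_simp
    simp only [hone]
    exact Matrix.diagonal_one
  -- the projector P
  set P : Matrix (Fin d × Fin n) (Fin d × Fin n) ℝ := UH * UHᵀ with hPdef
  have hPt : Pᵀ = P := by rw [hPdef, Matrix.transpose_mul, Matrix.transpose_transpose]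
  have hPP : P * P = P := by
    rw [hPdef, Matrix.mul_assoc UH UHᵀ (UH * UHᵀ), ← Matrix.mul_assoc UHᵀ UH UHᵀ, hUHorth,
      Matrix.one_mul]
  -- diagonal entries of P are bounded
  have hPdiag : ∀ (p : Fin d) (a : Fin n), P (p,a) (p,a) ≤ ∑ l, (U a l)^2 / S0 l := by
    intro p a
    have hUHapp : ∀ l, UH (p,a) l = U a l * lam l ^ p.val * gg l := by
      intro l
      rw [hUHdef, Matrix.mul_diagonal, hWapp]
    have hPeq : P (p,a) (p,a) = ∑ l, (U a l)^2 * (lam l ^ p.val)^2 * (S0 l)⁻¹ := by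
      rw [hPdef]
      simp only [Matrix.mul_apply, Matrix.transpose_apply]
      refine Finset.sum_congr rfl fun l _ => ?_
      rw [hUHapp]
      have hgl : gg l * gg l = (S0 l)⁻¹ := by
        rw [hgg, ← mul_inv, Real.mul_self_sqrt (le_of_lt (hS0pos l))]
      rw [show (U a l * lam l ^ p.val * gg l) * (U a l * lam l ^ p.val * gg l)
          = (U a l)^2 * (lam l ^ p.val)^2 * (gg l * gg l) by ring, hgl]
    rw [hPeq]
    refine Finset.sum_le_sum fun l _ => ?_
    have h1 : (lam l ^ p.val)^2 ≤ 1 := by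
      have h2 : lam l ^ p.val ≤ 1 := pow_le_one₀ (le_of_lt (hlam l)) (hlam1 l)
      have h3 : 0 < lam l ^ p.val := pow_pos (hlam l) _
      nlinarith
    calc (U a l)^2 * (lam l ^ p.val)^2 * (S0 l)⁻¹
        ≤ (U a l)^2 * 1 * (S0 l)⁻¹ :=
          mul_le_mul_of_nonneg_right
            (mul_le_mul_of_nonneg_left h1 (sq_nonneg (U a l)))
            (inv_nonneg.mpr (le_of_lt (hS0pos l)))
      _ = (U a l)^2 / S0 l := by rw [mul_one, div_eq_mul_inv]
  -- the Hankel basis matrix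
  set E : Matrix (Fin d × Fin n) (Fin d × Fin n) ℝ :=
    blockHankel n d d T (Etuple n T i j t) with hE
  set S : Finset (Fin d × Fin d) :=
    Finset.univ.filter (fun z : Fin d × Fin d => z.1.val + z.2.val = t.val) with hSdef
  have hmemS : ∀ z : Fin d × Fin d, z ∈ S ↔ z.1.val + z.2.val = t.val := by
    intro z; simp [hSdef]
  have hEdecomp : E = ∑ z ∈ S,
      Matrix.single ((z.1, i) : Fin d × Fin n) ((z.2, j) : Fin d × Fin n) (1:ℝ) := by
    ext ⟨p, a⟩ ⟨q, b⟩
    rw [Matrix.sum_apply]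
    have hrhs : ∀ z ∈ S,
        Matrix.single ((z.1, i) : Fin d × Fin n) ((z.2, j) : Fin d × Fin n) (1:ℝ) (p,a) (q,b)
        = if z = (p, q) then (if i = a ∧ j = b then (1:ℝ) else 0) else 0 := by
      intro z _
      simp only [Matrix.single, Matrix.of_apply, Prod.mk.injEq, Prod.ext_iff]
      by_cases h1 : z.1 = p <;> by_cases h2 : z.2 = q <;>
        by_cases h3 : i = a <;> by_cases h4 : j = b <;> simp [h1, h2, h3, h4]
    rw [Finset.sum_congr rfl hrhs, Finset.sum_ite_eq' S (p, q)]
    by_cases hpq : p.val + q.val = t.val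
    · have hmem : (p, q) ∈ S := (hmemS _).mpr hpq
      rw [if_pos hmem]
      have hlt : p.val + q.val < T := by have := t.isLt; omega
      simp only [hE, blockHankel, Etuple, Matrix.of_apply, dif_pos hlt]
      have heq : (⟨p.val + q.val, hlt⟩ : Fin T) = t := by ext; exact hpq
      rw [if_pos heq]
      simp [Matrix.single]
    · have hmem : (p, q) ∉ S := fun h => hpq ((hmemS _).mp h)
      rw [if_neg hmem]
      simp only [hE, blockHankel, Etuple, Matrix.of_apply]
      split_ifs with hlt heq
      · exact absurd (congrArg Fin.val heq) hpq
      · rfl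
      · rfl
  have hScard : 1 ≤ S.card := by
    refine Finset.card_pos.mpr ⟨(⟨min t.val (d-1), by omega⟩, ⟨t.val - min t.val (d-1), by
      have := t.isLt; omega⟩), ?_⟩
    rw [hmemS]
    have := t.isLt
    simp only []
    omega
  have huniq : ∀ z ∈ S, ∀ w ∈ S, z.2 = w.2 → z = w := by
    intro z hz w hw h2
    have hz' := (hmemS z).mp hz
    have hw' := (hmemS w).mp hw
    have h2' : (z.2 : ℕ) = (w.2 : ℕ) := congrArg Fin.val h2
    have h1 : z.1 = w.1 := by ext; omega
    exact Prod.ext h1 h2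
  -- trace identities
  have htrE : ∀ P' : Matrix (Fin d × Fin n) (Fin d × Fin n) ℝ,
      (E * Eᵀ * P').trace = ∑ z ∈ S, P' (z.1, i) (z.1, i) := by
    intro P'
    rw [hEdecomp, Matrix.transpose_sum]
    simp only [Finset.sum_mul, Finset.mul_sum, Matrix.trace_sum]
    refine Finset.sum_congr rfl fun z hz => ?_
    have hterm : ∀ w ∈ S,
        (Matrix.single ((w.1,i) : Fin d × Fin n) (w.2,j) (1:ℝ) *
          (Matrix.single ((z.1,i) : Fin d × Fin n) (z.2,j) (1:ℝ))ᵀ * P').trace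
        = if w = z then P' (z.1,i) (z.1,i) else 0 := by
      intro w hw
      rw [transpose_stdBasisMatrix']
      by_cases hzw : w = z
      · subst hzw
        rw [if_pos rfl, Matrix.single_mul_single_same (c := 1) (w.1,i) (w.2,j) (w.1,i) 1, one_mul,
          trace_stdBasisMatrix_mul']
      · rw [if_neg hzw]
        have hne : ((w.2, j) : Fin d × Fin n) ≠ (z.2, j) := by
          intro hcontra
          exact hzw (huniq w hw z hz (Prod.ext_iff.mp hcontra).1)
        rw [Matrix.single_mul_single_of_ne (c := 1) (w.1,i) (w.2,j) (z.2,j) hne 1, Matrix.zero_mul,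
          Matrix.trace_zero]
    rw [Finset.sum_congr rfl hterm, Finset.sum_ite_eq' S z, if_pos hz]
  have htrF : ∀ P' : Matrix (Fin d × Fin n) (Fin d × Fin n) ℝ,
      (Eᵀ * E * P').trace = ∑ z ∈ S, P' (z.2, j) (z.2, j) := by
    intro P'
    rw [hEdecomp, Matrix.transpose_sum]
    simp only [Finset.sum_mul, Finset.mul_sum, Matrix.trace_sum]
    refine Finset.sum_congr rfl fun z hz => ?_
    have hterm : ∀ w ∈ S,
        ((Matrix.single ((w.1,i) : Fin d × Fin n) (w.2,j) (1:ℝ))ᵀ *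
          Matrix.single ((z.1,i) : Fin d × Fin n) (z.2,j) (1:ℝ) * P').trace
        = if w = z then P' (z.2,j) (z.2,j) else 0 := by
      intro w hw
      rw [transpose_stdBasisMatrix']
      by_cases hzw : w = z
      · subst hzw
        rw [if_pos rfl, Matrix.single_mul_single_same (c := 1) (w.2,j) (w.1,i) (w.2,j) 1, one_mul,
          trace_stdBasisMatrix_mul']
      · rw [if_neg hzw]
        have hne : ((w.1, i) : Fin d × Fin n) ≠ (z.1, i) := by
          intro hcontra
          have h1 : w.1 = z.1 := (Prod.ext_iff.mp hcontra).1
          have hz' := (hmemS z).mp hz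
          have hw' := (hmemS w).mp hw
          have h1' : (w.1 : ℕ) = (z.1 : ℕ) := congrArg Fin.val h1
          have h2 : w.2 = z.2 := by ext; omega
          exact hzw (Prod.ext h1 h2)
        rw [Matrix.single_mul_single_of_ne (c := 1) (w.2,j) (w.1,i) (z.1,i) hne 1, Matrix.zero_mul,
          Matrix.trace_zero]
    rw [Finset.sum_congr rfl hterm, Finset.sum_ite_eq' S z, if_pos hz]
  -- the Frobenius norm of E
  have hEfro : frobNorm E = Real.sqrt (S.card : ℝ) := by
    unfold frobNorm
    congr 1
    rw [sum_sq_eq_trace', show E * Eᵀ = E * Eᵀ * 1 by rw [Matrix.mul_one], htrE 1]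
    simp [Matrix.one_apply]
  set c : ℝ := (Real.sqrt (S.card : ℝ))⁻¹ with hc
  have hB : Bmat n d d T i j t = c • E := by
    unfold Bmat
    rw [← hE, hEfro]
  have hcc : c * c = ((S.card : ℝ))⁻¹ := by
    rw [hc, ← mul_inv, Real.mul_self_sqrt (by positivity)]
  have hcardne : ((S.card : ℝ)) ≠ 0 := by
    have : (1:ℝ) ≤ (S.card : ℝ) := by exact_mod_cast hScard
    linarith
  set M : Matrix (Fin d × Fin n) (Fin d × Fin n) ℝ := Bmat n d d T i j t with hM
  -- the two trace bounds
  have htr1 : (M * Mᵀ * P).trace ≤ ∑ l, (U i l)^2 / S0 l := by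
    have heq : M * Mᵀ * P = (c * c) • (E * Eᵀ * P) := by
      rw [hB]
      simp only [Matrix.transpose_smul, Matrix.smul_mul, Matrix.mul_smul, smul_smul]
    rw [heq, Matrix.trace_smul, smul_eq_mul]
    have hsum : ∑ z ∈ S, P (z.1, i) (z.1, i) ≤ (S.card : ℝ) * (∑ l, (U i l)^2 / S0 l) := by
      calc ∑ z ∈ S, P (z.1, i) (z.1, i) ≤ ∑ _z ∈ S, (∑ l, (U i l)^2 / S0 l) :=
            Finset.sum_le_sum fun z _ => hPdiag z.1 i
        _ = (S.card : ℝ) * (∑ l, (U i l)^2 / S0 l) := by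
            rw [Finset.sum_const, nsmul_eq_mul]
    calc c * c * (E * Eᵀ * P).trace ≤ c * c * ((S.card : ℝ) * (∑ l, (U i l)^2 / S0 l)) := by
          rw [htrE P]
          have h0 : 0 ≤ c * c := by rw [hcc]; positivity
          exact mul_le_mul_of_nonneg_left hsum h0
      _ = ∑ l, (U i l)^2 / S0 l := by
          rw [hcc, ← mul_assoc, inv_mul_cancel₀ hcardne, one_mul]
  have htr2 : (Mᵀ * M * P).trace ≤ ∑ l, (U j l)^2 / S0 l := by
    have heq : Mᵀ * M * P = (c * c) • (Eᵀ * E * P) := by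
      rw [hB]
      simp only [Matrix.transpose_smul, Matrix.smul_mul, Matrix.mul_smul, smul_smul]
    rw [heq, Matrix.trace_smul, smul_eq_mul]
    have hsum : ∑ z ∈ S, P (z.2, j) (z.2, j) ≤ (S.card : ℝ) * (∑ l, (U j l)^2 / S0 l) := by
      calc ∑ z ∈ S, P (z.2, j) (z.2, j) ≤ ∑ _z ∈ S, (∑ l, (U j l)^2 / S0 l) :=
            Finset.sum_le_sum fun z _ => hPdiag z.2 j
        _ = (S.card : ℝ) * (∑ l, (U j l)^2 / S0 l) := by
            rw [Finset.sum_const, nsmul_eq_mul]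
    calc c * c * (Eᵀ * E * P).trace ≤ c * c * ((S.card : ℝ) * (∑ l, (U j l)^2 / S0 l)) := by
          rw [htrF P]
          have h0 : 0 ≤ c * c := by rw [hcc]; positivity
          exact mul_le_mul_of_nonneg_left hsum h0
      _ = ∑ l, (U j l)^2 / S0 l := by
          rw [hcc, ← mul_assoc, inv_mul_cancel₀ hcardne, one_mul]
  -- the squared Frobenius norm of the projection
  have htansq : frobNorm (tanProj UH UH M) ^ 2
      ≤ (∑ l, (U i l)^2 / S0 l) + (∑ l, (U j l)^2 / S0 l) := by
    have htp : tanProj UH UH M = P*M + M*P - P*M*P := rfl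
    have hfr : frobNorm (tanProj UH UH M) ^ 2
        = ((P*M + M*P - P*M*P) * (P*M + M*P - P*M*P)ᵀ).trace := by
      rw [htp, frobNorm, Real.sq_sqrt (by positivity), sum_sq_eq_trace']
    rw [hfr, proj_expand' P M hPP hPt]
    have h0 := trace_self_transpose_nonneg' (P*M*P)
    linarith
  -- final arithmetic
  set GG : Fin n → ℝ := fun i' => ∑ l, (n:ℝ)*(d:ℝ)*(U i' l)^2/((r:ℝ)*S0 l) with hGG
  set C0 : ℝ := ((T : ℝ) * ((T : ℝ) + 1) / ((d : ℝ) * (d : ℝ))) * (r : ℝ) / ((n : ℝ) * (T : ℝ))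
    with hC0
  have hTcast : (T:ℝ) = 2*(d:ℝ) - 1 := by
    rw [hT, Nat.cast_sub (by omega : 1 ≤ d + d)]
    push_cast; ring
  have hdpos : (0:ℝ) < (d:ℝ) := by exact_mod_cast (by omega : 0 < d)
  have hnpos : (0:ℝ) < (n:ℝ) := by exact_mod_cast hn
  have hrpos : (0:ℝ) < (r:ℝ) := by exact_mod_cast hr
  have hd2 : (2:ℝ) ≤ (d:ℝ) := by exact_mod_cast hd
  have hTpos : (0:ℝ) < (T:ℝ) := by rw [hTcast]; linarith
  have hkey : ∀ a : Fin n, C0 * GG a = 2 * (∑ l, (U a l)^2 / S0 l) := by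
    intro a
    rw [hGG, hC0]
    simp only []
    rw [Finset.mul_sum, Finset.mul_sum]
    refine Finset.sum_congr rfl fun l _ => ?_
    have hS0ne : S0 l ≠ 0 := ne_of_gt (hS0pos l)
    have hT1 : (T:ℝ) + 1 = 2*(d:ℝ) := by rw [hTcast]; ring
    rw [hT1]
    field_simp
  have hbdd : BddAbove (Set.range GG) := (Set.finite_range GG).bddAbove
  have hGi : GG i ≤ ⨆ i', GG i' := le_ciSup hbdd i
  have hGj : GG j ≤ ⨆ i', GG i' := le_ciSup hbdd j
  have hC0nn : 0 ≤ C0 := by rw [hC0]; positivity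
  have hfinal : frobNorm (tanProj UH UH M) ^ 2 ≤ C0 * ⨆ i', GG i' := by
    have h1 : C0 * GG i ≤ C0 * ⨆ i', GG i' := mul_le_mul_of_nonneg_left hGi hC0nn
    have h2 : C0 * GG j ≤ C0 * ⨆ i', GG i' := mul_le_mul_of_nonneg_left hGj hC0nn
    have hk1 := hkey i
    have hk2 := hkey j
    linarith
  exact hfinal
end
end

section
/- Let n, d1, d2 ≥ 1 and T = d1 + d2 − 1. Let R_Ω be a linear operator on the space of T-tuples of real n×n matrices of the form R_Ω(L) = Σ_{(i,j,t)∈Ω} w_{i,j,t}·⟨E_{i,j,t}, L⟩_F·E_{i,j,t} with weights w_{i,j,t} > 0 for a subset Ω ⊆ [n]×[n]×[T]. Let H ∈ ℝ^{d1·n × d2·n} have rank r, let T_H be the tangent space to the rank-r matrix manifold at H, and suppose ‖P_{T_H} G R_Ω G* P_{T_H} − P_{T_H} G G* P_{T_H}‖ ≤ 2/5 (operator norm with respect to Frobenius norms). Then for every tuple η with R_Ω(η) = 0, ‖H(η)‖_F² ≤ (5/3)·(‖R_Ω‖ + 8/5)·‖P_{T_H^⊥} H(η)‖_F², where P_{T_H^⊥}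 = Id − P_{T_H} is the projection onto the orthogonal complement of T_H. -/
noncomputable section

open Matrix

def tupNorm {n T : ℕ} (X : Fin T → Matrix (Fin n) (Fin n) ℝ) : ℝ :=
  Real.sqrt (∑ t, ∑ i, ∑ j, (X t i j) ^ 2)

/-- The normalized block Hankel operator `G`. -/
def Gop (n d1 d2 T : ℕ) (X : Fin T → Matrix (Fin n) (Fin n) ℝ) :
    Matrix (Fin d1 × Fin n) (Fin d2 × Fin n) ℝ :=
  ∑ t : Fin T, ∑ i : Fin n, ∑ j : Fin n, X t i j • Bmat n d1 d2 T i j t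

/-- The adjoint `G*` of the normalized block Hankel operator. -/
def Gstar (n d1 d2 T : ℕ) (M : Matrix (Fin d1 × Fin n) (Fin d2 × Fin n) ℝ) :
    Fin T → Matrix (Fin n) (Fin n) ℝ :=
  fun t => Matrix.of fun i j => frobInner (Bmat n d1 d2 T i j t) M

/-- Operator norm (w.r.t. Frobenius norms) of a map on matrices. -/
def opNormM {α β : Type*} [Fintype α] [Fintype β]
    (L : Matrix α β ℝ → Matrix α β ℝ) : ℝ :=
  sInf {c : ℝ | 0 ≤ c ∧ ∀ M, frobNorm (L M) ≤ c * frobNorm M}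

/-- Operator norm (w.r.t. Frobenius norms) of a map on matrix tuples. -/
def opNormT {n T : ℕ}
    (L : (Fin T → Matrix (Fin n) (Fin n) ℝ) → (Fin T → Matrix (Fin n) (Fin n) ℝ)) : ℝ :=
  sInf {c : ℝ | 0 ≤ c ∧ ∀ X, tupNorm (L X) ≤ c * tupNorm X}

/-- The sampling operator `R_Ω(L) = Σ_{(i,j,t)∈Ω} w_{i,j,t}·⟨E_{i,j,t}, L⟩_F·E_{i,j,t}`. -/
def ROp (n T : ℕ) (Ω : Finset (Fin n × Fin n × Fin T)) (w : Fin n × Fin n × Fin T → ℝ)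
    (L : Fin T → Matrix (Fin n) (Fin n) ℝ) : Fin T → Matrix (Fin n) (Fin n) ℝ :=
  fun t => Matrix.of fun i j => if (i, j, t) ∈ Ω then w (i, j, t) * L t i j else 0

/-- The `k`-th largest singular value (1-based) of a real matrix. -/
def singVal {α β : Type*} [Fintype α] [Fintype β] [DecidableEq β]
    (M : Matrix α β ℝ) (k : ℕ) : ℝ :=
  (((Multiset.map
      (fun j => Real.sqrt ((show (Mᵀ * M).IsHermitian by
        simpa using Matrix.isHermitian_conjTranspose_mul_self M).eigenvalues j))
      Finset.univ.val).sort (· ≤ ·)).reverse).getD (k - 1) 0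

/-- The spectral norm of a real matrix (its largest singular value). -/
def specNorm {α β : Type*} [Fintype α] [Fintype β] [DecidableEq β]
    (M : Matrix α β ℝ) : ℝ := singVal M 1


set_option linter.unusedVariables false
set_option linter.unreachableTactic false
set_option linter.unusedTactic false

namespace LRIPAux

section FI
variable {α β : Type*} [Fintype α] [Fintype β] (M N P : Matrix α β ℝ)

lemma fi_comm : frobInner M N = frobInner N M := by
  simp [frobInner, mul_comm]

lemma fi_self_nonneg : 0 ≤ frobInner M M := by
  apply Finset.sum_nonneg; intro i _; apply Finset.sum_nonneg; intro j _
  exact mul_self_nonneg _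

lemma fn_sq : frobNorm M ^ 2 = frobInner M M := by
  rw [frobNorm, Real.sq_sqrt]
  · simp [frobInner, sq]
  · apply Finset.sum_nonneg; intro i _; apply Finset.sum_nonneg; intro j _; positivity

lemma fn_nonneg : 0 ≤ frobNorm M := Real.sqrt_nonneg _

lemma fn_eq_sqrt_inner : frobNorm M = Real.sqrt (frobInner M M) := by
  rw [frobNorm]; congr 1; simp [frobInner, sq]

lemma fi_add_left : frobInner (M + N) P = frobInner M P + frobInner N P := by
  simp [frobInner, add_mul, Finset.sum_add_distrib]

lemma fi_sub_left : frobInner (M - N) P = frobInner M P - frobInner N P := by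
  simp [frobInner, sub_mul, Finset.sum_sub_distrib]

lemma fi_add_right : frobInner M (N + P) = frobInner M N + frobInner M P := by
  rw [fi_comm, fi_add_left, fi_comm N M, fi_comm P M]

lemma fi_sub_right : frobInner M (N - P) = frobInner M N - frobInner M P := by
  rw [fi_comm, fi_sub_left, fi_comm N M, fi_comm P M]

lemma fi_smul_left (c : ℝ) : frobInner (c • M) N = c * frobInner M N := by
  simp [frobInner, Finset.mul_sum, mul_assoc]

lemma fi_smul_right (c : ℝ) : frobInner M (c • N) = c * frobInner M N := by
  rw [fi_comm, fi_smul_left, fi_comm N M]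

lemma fi_sum_left {ι : Type*} (s : Finset ι) (f : ι → Matrix α β ℝ) (N : Matrix α β ℝ) :
    frobInner (∑ k ∈ s, f k) N = ∑ k ∈ s, frobInner (f k) N := by
  classical
  induction s using Finset.induction with
  | empty => simp [frobInner]
  | insert _ _ h ih => rw [Finset.sum_insert h, fi_add_left, ih, Finset.sum_insert h]

lemma fi_sum_right {ι : Type*} (s : Finset ι) (f : ι → Matrix α β ℝ) (N : Matrix α β ℝ) :
    frobInner N (∑ k ∈ s, f k) = ∑ k ∈ s, frobInner N (f k) := by
  rw [fi_comm, fi_sum_left]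
  exact Finset.sum_congr rfl fun k _ => fi_comm _ _

lemma fi_cauchy : frobInner M N ≤ frobNorm M * frobNorm N := by
  rw [frobInner, frobNorm, frobNorm]
  have h := Real.sum_mul_le_sqrt_mul_sqrt (Finset.univ (α := α × β))
    (fun p => M p.1 p.2) (fun p => N p.1 p.2)
  simpa [Fintype.sum_prod_type] using h

lemma fn_neg : frobNorm (-M) = frobNorm M := by simp [frobNorm]

lemma fi_abs_cauchy : |frobInner M N| ≤ frobNorm M * frobNorm N := by
  rcases abs_cases (frobInner M N) with ⟨h, _⟩ | ⟨h, _⟩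
  · rw [h]; exact fi_cauchy M N
  · rw [h]
    have h2 : -frobInner M N = frobInner (-M) N := by
      have := fi_smul_left M N (-1); simpa using this.symm
    rw [h2]
    calc frobInner (-M) N ≤ frobNorm (-M) * frobNorm N := fi_cauchy _ _
    _ = frobNorm M * frobNorm N := by rw [fn_neg]

lemma fn_triangle : frobNorm (M + N) ≤ frobNorm M + frobNorm N := by
  have h1 : frobNorm (M + N) ^ 2 ≤ (frobNorm M + frobNorm N) ^ 2 := by
    rw [fn_sq, fi_add_left, fi_add_right, fi_add_right, add_sq]
    have := fi_cauchy M N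
    have h2 := fn_sq M; have h3 := fn_sq N
    nlinarith [fi_comm N M]
  have := fn_nonneg (M + N)
  nlinarith [fn_nonneg M, fn_nonneg N]

lemma fn_sub_le : frobNorm (M - N) ≤ frobNorm M + frobNorm N := by
  have := fn_triangle M (-N)
  simpa [sub_eq_add_neg, fn_neg] using this

/-- trace representation of the Frobenius inner product. -/
lemma fi_eq_trace : frobInner M N = (Mᵀ * N).trace := by
  simp only [frobInner, Matrix.trace, Matrix.diag, Matrix.mul_apply,
    Matrix.transpose_apply]
  rw [Finset.sum_comm]

lemma fi_mul_left {γ : Type*} [Fintype γ] (A : Matrix α γ ℝ) (M : Matrix γ β ℝ)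
    (N : Matrix α β ℝ) : frobInner (A * M) N = frobInner M (Aᵀ * N) := by
  rw [fi_eq_trace, fi_eq_trace, Matrix.transpose_mul, Matrix.mul_assoc]

lemma fi_mul_right {γ : Type*} [Fintype γ] (B : Matrix β γ ℝ) (M : Matrix α γ ℝ)
    (N : Matrix α β ℝ) :
    frobInner (M * Bᵀ) N = frobInner M (N * B) := by
  rw [fi_eq_trace, fi_eq_trace, Matrix.transpose_mul, Matrix.transpose_transpose,
    Matrix.mul_assoc, Matrix.trace_mul_comm, Matrix.mul_assoc]

end FI

section TI

variable {n T : ℕ}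

/-- Inner product on tuples of matrices. -/
def tInner (X Y : Fin T → Matrix (Fin n) (Fin n) ℝ) : ℝ :=
  ∑ t, ∑ i, ∑ j, X t i j * Y t i j

variable (X Y Z : Fin T → Matrix (Fin n) (Fin n) ℝ)

lemma ti_comm : tInner X Y = tInner Y X := by simp [tInner, mul_comm]

lemma ti_self_nonneg : 0 ≤ tInner X X := by
  apply Finset.sum_nonneg; intro t _; apply Finset.sum_nonneg; intro i _
  apply Finset.sum_nonneg; intro j _; exact mul_self_nonneg _

lemma tn_sq : tupNorm X ^ 2 = tInner X X := by
  rw [tupNorm, Real.sq_sqrt]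
  · simp [tInner, sq]
  · apply Finset.sum_nonneg; intro t _; apply Finset.sum_nonneg; intro i _
    apply Finset.sum_nonneg; intro j _; positivity

lemma tn_nonneg : 0 ≤ tupNorm X := Real.sqrt_nonneg _

lemma ti_sub_left : tInner (X - Y) Z = tInner X Z - tInner Y Z := by
  simp [tInner, sub_mul, Finset.sum_sub_distrib]

lemma ti_sub_right : tInner X (Y - Z) = tInner X Y - tInner X Z := by
  rw [ti_comm, ti_sub_left, ti_comm Y X, ti_comm Z X]

lemma ti_cauchy : tInner X Y ≤ tupNorm X * tupNorm Y := by
  rw [tInner, tupNorm, tupNorm]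
  have h := Real.sum_mul_le_sqrt_mul_sqrt (Finset.univ (α := Fin T × Fin n × Fin n))
    (fun p => X p.1 p.2.1 p.2.2) (fun p => Y p.1 p.2.1 p.2.2)
  simpa [Fintype.sum_prod_type] using h

end TI

end LRIPAux
namespace LRIPAux

section Hankel
variable {n d1 d2 T : ℕ}

lemma bh_etuple_apply (n d1 d2 T : ℕ) (i j : Fin n) (t : Fin T)
    (a : Fin d1) (x : Fin n) (b : Fin d2) (y : Fin n) :
    blockHankel n d1 d2 T (Etuple n T i j t) (a, x) (b, y)
      = if a.val + b.val = t.val ∧ i = x ∧ j = y then 1 else 0 := by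
  rw [blockHankel]
  simp only [Matrix.of_apply, Etuple]
  split_ifs with h1 h2 h3 h3 h2 h3 <;>
    simp_all [Matrix.single, Fin.ext_iff] <;> omega

def Nval (d1 d2 : ℕ) (t : ℕ) : ℕ :=
  (Finset.univ.filter (fun p : Fin d1 × Fin d2 => p.1.val + p.2.val = t)).card

lemma Nval_pos (d1 d2 T : ℕ) (hd1 : 1 ≤ d1) (hd2 : 1 ≤ d2) (hT : T = d1 + d2 - 1)
    (t : Fin T) : 0 < Nval d1 d2 t.val := by
  have ht := t.isLt
  rw [Nval, Finset.card_pos]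
  by_cases h : t.val < d1
  · exact ⟨(⟨t.val, h⟩, ⟨0, by omega⟩), by simp⟩
  · refine ⟨(⟨d1 - 1, by omega⟩, ⟨t.val - (d1 - 1), by omega⟩), ?_⟩
    simp only [Finset.mem_filter, Finset.mem_univ, true_and]
    omega

lemma fi_bh_self (n d1 d2 T : ℕ) (i j : Fin n) (t : Fin T) :
    frobInner (blockHankel n d1 d2 T (Etuple n T i j t))
      (blockHankel n d1 d2 T (Etuple n T i j t)) = (Nval d1 d2 t.val : ℝ) := by
  simp only [frobInner, Fintype.sum_prod_type, bh_etuple_apply]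
  have hsq : ∀ (c : Prop) (h : Decidable c),
      (if c then (1:ℝ) else 0) * (if c then 1 else 0) = if c then 1 else 0 := by
    intro c h; split <;> simp
  simp only [hsq]
  simp only [ite_and, Finset.sum_ite_irrel, Finset.sum_ite_eq, Finset.mem_univ, if_true,
    Finset.sum_const_zero]
  rw [Finset.sum_congr rfl (fun a _ => Finset.sum_comm)]
  simp only [Finset.sum_ite_irrel, Finset.sum_ite_eq, Finset.mem_univ, if_true,
    Finset.sum_const_zero]
  rw [← Finset.sum_product']
  rw [Finset.sum_boole]
  simp only [Nval, Finset.univ_product_univ]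

lemma fi_bh_orth (n d1 d2 T : ℕ) (i j i' j' : Fin n) (t t' : Fin T)
    (h : ¬(i = i' ∧ j = j' ∧ t = t')) :
    frobInner (blockHankel n d1 d2 T (Etuple n T i j t))
      (blockHankel n d1 d2 T (Etuple n T i' j' t')) = 0 := by
  simp only [frobInner, Fintype.sum_prod_type, bh_etuple_apply]
  apply Finset.sum_eq_zero; intro a _
  apply Finset.sum_eq_zero; intro x _
  apply Finset.sum_eq_zero; intro b _
  apply Finset.sum_eq_zero; intro y _
  split_ifs with h1 h2 <;> try simp
  exfalso; apply h
  obtain ⟨ha1, hi1, hj1⟩ := h1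
  obtain ⟨ha2, hi2, hj2⟩ := h2
  exact ⟨hi1.trans hi2.symm, hj1.trans hj2.symm, Fin.ext (by omega)⟩

variable (hd1 : 1 ≤ d1) (hd2 : 1 ≤ d2) (hT : T = d1 + d2 - 1)

lemma fn_bh_etuple (i j : Fin n) (t : Fin T) :
    frobNorm (blockHankel n d1 d2 T (Etuple n T i j t))
      = Real.sqrt (Nval d1 d2 t.val) := by
  rw [fn_eq_sqrt_inner, fi_bh_self]

include hd1 hd2 hT in
lemma fn_bh_pos (i j : Fin n) (t : Fin T) :
    0 < frobNorm (blockHankel n d1 d2 T (Etuple n T i j t)) := by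
  rw [fn_bh_etuple]
  apply Real.sqrt_pos.2
  exact_mod_cast Nval_pos d1 d2 T hd1 hd2 hT t

include hd1 hd2 hT in
lemma bmat_orthonormal (i j i' j' : Fin n) (t t' : Fin T) :
    frobInner (Bmat n d1 d2 T i j t) (Bmat n d1 d2 T i' j' t')
      = if i = i' ∧ j = j' ∧ t = t' then 1 else 0 := by
  rw [Bmat, Bmat, fi_smul_left, fi_smul_right]
  split_ifs with h
  · obtain ⟨rfl, rfl, rfl⟩ := h
    rw [fi_bh_self, fn_bh_etuple]
    have hp : (0:ℝ) < (Nval d1 d2 t.val : ℝ) := by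
      exact_mod_cast Nval_pos d1 d2 T hd1 hd2 hT t
    have hs : Real.sqrt (Nval d1 d2 t.val) * Real.sqrt (Nval d1 d2 t.val)
        = (Nval d1 d2 t.val : ℝ) := Real.mul_self_sqrt hp.le
    have hsp : (0:ℝ) < Real.sqrt (Nval d1 d2 t.val) := Real.sqrt_pos.2 hp
    field_simp
    rw [Real.sq_sqrt hp.le]
  · rw [fi_bh_orth n d1 d2 T i j i' j' t t' h, mul_zero, mul_zero]

end Hankel
end LRIPAux
namespace LRIPAux

section GopLemmas
variable {n d1 d2 T : ℕ} (hd1 : 1 ≤ d1) (hd2 : 1 ≤ d2) (hT : T = d1 + d2 - 1)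

lemma tn_eq_sqrt_inner (X : Fin T → Matrix (Fin n) (Fin n) ℝ) :
    tupNorm X = Real.sqrt (tInner X X) := by
  rw [tupNorm]; congr 1; simp [tInner, sq]

lemma fi_gop (X : Fin T → Matrix (Fin n) (Fin n) ℝ)
    (N : Matrix (Fin d1 × Fin n) (Fin d2 × Fin n) ℝ) :
    frobInner (Gop n d1 d2 T X) N = tInner X (Gstar n d1 d2 T N) := by
  rw [Gop]
  simp only [fi_sum_left, fi_smul_left]
  simp [tInner, Gstar]

include hd1 hd2 hT in
lemma gstar_gop (X : Fin T → Matrix (Fin n) (Fin n) ℝ) :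
    Gstar n d1 d2 T (Gop n d1 d2 T X) = X := by
  funext s; ext i j
  show frobInner (Bmat n d1 d2 T i j s) (Gop n d1 d2 T X) = X s i j
  rw [fi_comm, Gop]
  simp only [fi_sum_left, fi_smul_left]
  simp only [bmat_orthonormal hd1 hd2 hT]
  simp only [mul_ite, mul_one, mul_zero, ite_and, Finset.sum_ite_irrel,
    Finset.sum_ite_eq', Finset.mem_univ, if_true, Finset.sum_const_zero]

include hd1 hd2 hT in
lemma fi_gop_gop (X Y : Fin T → Matrix (Fin n) (Fin n) ℝ) :
    frobInner (Gop n d1 d2 T X) (Gop n d1 d2 T Y) = tInner X Y := by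
  rw [fi_gop, gstar_gop hd1 hd2 hT]

include hd1 hd2 hT in
lemma fn_gop (X : Fin T → Matrix (Fin n) (Fin n) ℝ) :
    frobNorm (Gop n d1 d2 T X) = tupNorm X := by
  rw [fn_eq_sqrt_inner, fi_gop_gop hd1 hd2 hT, tn_eq_sqrt_inner]

include hd1 hd2 hT in
lemma bessel (M : Matrix (Fin d1 × Fin n) (Fin d2 × Fin n) ℝ) :
    tupNorm (Gstar n d1 d2 T M) ≤ frobNorm M := by
  set X := Gstar n d1 d2 T M with hX
  have h1 : frobInner (Gop n d1 d2 T X) M = tInner X X := by rw [fi_gop, ← hX]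
  have h2 : tupNorm X ^ 2 = tInner X X := tn_sq X
  have h3 : frobInner (Gop n d1 d2 T X) M
      ≤ frobNorm (Gop n d1 d2 T X) * frobNorm M := fi_cauchy _ _
  rw [fn_gop hd1 hd2 hT] at h3
  rcases eq_or_lt_of_le (tn_nonneg X) with h4 | h4
  · rw [← h4]; exact fn_nonneg M
  · nlinarith

lemma gstar_add (M N : Matrix (Fin d1 × Fin n) (Fin d2 × Fin n) ℝ) :
    Gstar n d1 d2 T (M + N) = Gstar n d1 d2 T M + Gstar n d1 d2 T N := by
  funext t; ext i j
  show frobInner _ (M + N) = frobInner _ M + frobInner _ N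
  rw [fi_add_right]

include hd1 hd2 hT in
lemma gop_eta_rep (η : Fin T → Matrix (Fin n) (Fin n) ℝ) :
    Gop n d1 d2 T (fun t => Matrix.of fun i j =>
        frobNorm (blockHankel n d1 d2 T (Etuple n T i j t)) * η t i j)
      = blockHankel n d1 d2 T η := by
  rw [Gop]
  have step : ∀ (t : Fin T) (i j : Fin n),
      (Matrix.of fun i' j' =>
        frobNorm (blockHankel n d1 d2 T (Etuple n T i' j' t)) * η t i' j') i j
          • Bmat n d1 d2 T i j t
        = η t i j • blockHankel n d1 d2 T (Etuple n T i j t) := by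
    intro t i j
    have hc := (fn_bh_pos hd1 hd2 hT i j t).ne'
    rw [Matrix.of_apply, Bmat, smul_smul]
    congr 1
    field_simp
  simp only [step]
  ext ⟨a, x⟩ ⟨b, y⟩
  simp only [Matrix.sum_apply, Matrix.smul_apply, bh_etuple_apply, smul_eq_mul,
    mul_ite, mul_one, mul_zero, ite_and, Finset.sum_ite_irrel,
    Finset.sum_ite_eq', Finset.mem_univ, if_true, Finset.sum_const_zero]
  rw [blockHankel, Matrix.of_apply]
  by_cases h : a.val + b.val < T
  · rw [dif_pos h]
    have hiff : ∀ t : Fin T, (a.val + b.val = t.val)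
        ↔ ((⟨a.val + b.val, h⟩ : Fin T) = t) := by
      intro t; rw [Fin.ext_iff]
    simp_rw [hiff]
    simp [Finset.sum_ite_eq]
  · rw [dif_neg h]
    apply Finset.sum_eq_zero; intro t _
    rw [if_neg]
    intro hc
    exact h (hc ▸ t.isLt)

end GopLemmas
end LRIPAux
namespace LRIPAux

section TP
variable {α β : Type*} [Fintype α] [Fintype β] {r : ℕ}
variable (U : Matrix α (Fin r) ℝ) (V : Matrix β (Fin r) ℝ)

lemma tp_selfadj (M N : Matrix α β ℝ) :
    frobInner (tanProj U V M) N = frobInner M (tanProj U V N) := by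
  set S := U * Uᵀ with hSdef
  set Q := V * Vᵀ with hQdef
  have hS : Sᵀ = S := by rw [hSdef, Matrix.transpose_mul, Matrix.transpose_transpose]
  have hQ : Qᵀ = Q := by rw [hQdef, Matrix.transpose_mul, Matrix.transpose_transpose]
  show frobInner (S * M + M * Q - S * M * Q) N = frobInner M (S * N + N * Q - S * N * Q)
  rw [fi_sub_left, fi_add_left, fi_sub_right, fi_add_right]
  have h1 : frobInner (S * M) N = frobInner M (S * N) := by
    rw [fi_mul_left, hS]
  have h2 : frobInner (M * Q) N = frobInner M (N * Q) := by
    have h := fi_mul_right Q M N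
    rwa [hQ] at h
  have h3 : frobInner (S * M * Q) N = frobInner M (S * N * Q) := by
    have ha := fi_mul_right Q (S * M) N
    rw [hQ] at ha
    rw [ha, fi_mul_left, hS, ← Matrix.mul_assoc]
  rw [h1, h2, h3]

lemma tp_idem (hU : Uᵀ * U = 1) (hV : Vᵀ * V = 1) (M : Matrix α β ℝ) :
    tanProj U V (tanProj U V M) = tanProj U V M := by
  set S := U * Uᵀ with hSdef
  set Q := V * Vᵀ with hQdef
  have hSS : S * S = S := by
    rw [hSdef, Matrix.mul_assoc, ← Matrix.mul_assoc Uᵀ U Uᵀ, hU, Matrix.one_mul]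
  have hQQ : Q * Q = Q := by
    rw [hQdef, Matrix.mul_assoc, ← Matrix.mul_assoc Vᵀ V Vᵀ, hV, Matrix.one_mul]
  have hQQ' : ∀ W : Matrix α β ℝ, W * Q * Q = W * Q := by
    intro W; rw [Matrix.mul_assoc, hQQ]
  show S * (S * M + M * Q - S * M * Q) + (S * M + M * Q - S * M * Q) * Q
      - S * (S * M + M * Q - S * M * Q) * Q = S * M + M * Q - S * M * Q
  simp only [Matrix.mul_add, Matrix.add_mul, Matrix.mul_sub, Matrix.sub_mul,
    ← Matrix.mul_assoc]
  simp only [hSS, hQQ']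
  abel

lemma tp_contract (hU : Uᵀ * U = 1) (hV : Vᵀ * V = 1) (M : Matrix α β ℝ) :
    frobNorm (tanProj U V M) ≤ frobNorm M := by
  have h1 : frobNorm (tanProj U V M) ^ 2
      = frobInner M (tanProj U V M) := by
    rw [fn_sq, tp_selfadj U V M (tanProj U V M), tp_idem U V hU hV]
  have h2 : frobInner M (tanProj U V M) ≤ frobNorm M * frobNorm (tanProj U V M) :=
    fi_cauchy _ _
  rcases eq_or_lt_of_le (fn_nonneg (tanProj U V M)) with h | h
  · rw [← h]; exact fn_nonneg M
  · nlinarith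

end TP

section OpNorm

lemma opNormM_nonneg {α β : Type*} [Fintype α] [Fintype β]
    (L : Matrix α β ℝ → Matrix α β ℝ) : 0 ≤ opNormM L :=
  Real.sInf_nonneg (fun _ hx => hx.1)

lemma opNormT_nonneg {n T : ℕ}
    (L : (Fin T → Matrix (Fin n) (Fin n) ℝ) → (Fin T → Matrix (Fin n) (Fin n) ℝ)) :
    0 ≤ opNormT L :=
  Real.sInf_nonneg (fun _ hx => hx.1)

lemma opNormM_bound {α β : Type*} [Fintype α] [Fintype β]
    {L : Matrix α β ℝ → Matrix α β ℝ} {c₀ : ℝ} (hc₀ : 0 ≤ c₀)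
    (hb : ∀ M, frobNorm (L M) ≤ c₀ * frobNorm M) (M : Matrix α β ℝ) :
    frobNorm (L M) ≤ opNormM L * frobNorm M := by
  have hne : {c : ℝ | 0 ≤ c ∧ ∀ M, frobNorm (L M) ≤ c * frobNorm M}.Nonempty :=
    ⟨c₀, hc₀, hb⟩
  rcases eq_or_lt_of_le (fn_nonneg M) with h | h
  · have hb' := hb M
    rw [← h, mul_zero] at hb'
    rw [opNormM, ← h, mul_zero]
    exact hb'
  · have hlow : frobNorm (L M) / frobNorm M ≤ opNormM L := by
      apply le_csInf hne
      intro c hc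
      rw [div_le_iff₀ h]
      exact hc.2 M
    calc frobNorm (L M) = frobNorm (L M) / frobNorm M * frobNorm M := by field_simp
    _ ≤ opNormM L * frobNorm M := mul_le_mul_of_nonneg_right hlow h.le

lemma opNormT_bound {n T : ℕ}
    {L : (Fin T → Matrix (Fin n) (Fin n) ℝ) → (Fin T → Matrix (Fin n) (Fin n) ℝ)}
    {c₀ : ℝ} (hc₀ : 0 ≤ c₀)
    (hb : ∀ X, tupNorm (L X) ≤ c₀ * tupNorm X) (X : Fin T → Matrix (Fin n) (Fin n) ℝ) :
    tupNorm (L X) ≤ opNormT L * tupNorm X := by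
  have hne : {c : ℝ | 0 ≤ c ∧ ∀ X, tupNorm (L X) ≤ c * tupNorm X}.Nonempty :=
    ⟨c₀, hc₀, hb⟩
  rcases eq_or_lt_of_le (tn_nonneg X) with h | h
  · have hb' := hb X
    rw [← h, mul_zero] at hb'
    rw [opNormT, ← h, mul_zero]
    exact hb'
  · have hlow : tupNorm (L X) / tupNorm X ≤ opNormT L := by
      apply le_csInf hne
      intro c hc
      rw [div_le_iff₀ h]
      exact hc.2 X
    calc tupNorm (L X) = tupNorm (L X) / tupNorm X * tupNorm X := by field_simp
    _ ≤ opNormT L * tupNorm X := mul_le_mul_of_nonneg_right hlow h.le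

end OpNorm

section RopLemmas
variable {n T : ℕ} (Ω : Finset (Fin n × Fin n × Fin T)) (w : Fin n × Fin n × Fin T → ℝ)

lemma rop_symm (X Y : Fin T → Matrix (Fin n) (Fin n) ℝ) :
    tInner (ROp n T Ω w X) Y = tInner X (ROp n T Ω w Y) := by
  rw [tInner, tInner]
  apply Finset.sum_congr rfl; intro t _
  apply Finset.sum_congr rfl; intro i _
  apply Finset.sum_congr rfl; intro j _
  show (if (i, j, t) ∈ Ω then w (i, j, t) * X t i j else 0) * Y t i j
      = X t i j * (if (i, j, t) ∈ Ω then w (i, j, t) * Y t i j else 0)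
  split_ifs <;> ring

lemma rop_sub (X Y : Fin T → Matrix (Fin n) (Fin n) ℝ) :
    ROp n T Ω w (X - Y) = ROp n T Ω w X - ROp n T Ω w Y := by
  funext t; ext i j
  show (if (i, j, t) ∈ Ω then w (i, j, t) * (X t i j - Y t i j) else 0)
      = (if (i, j, t) ∈ Ω then w (i, j, t) * X t i j else 0)
        - (if (i, j, t) ∈ Ω then w (i, j, t) * Y t i j else 0)
  split_ifs <;> ring

lemma rop_norm_le (hw : ∀ idx ∈ Ω, 0 < w idx) (X : Fin T → Matrix (Fin n) (Fin n) ℝ) :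
    tupNorm (ROp n T Ω w X) ≤ (∑ idx ∈ Ω, w idx) * tupNorm X := by
  set c₀ := ∑ idx ∈ Ω, w idx with hc₀def
  have hc₀ : 0 ≤ c₀ := Finset.sum_nonneg (fun idx h => (hw idx h).le)
  rw [tupNorm, tupNorm]
  have hsum : (∑ t, ∑ i, ∑ j, (ROp n T Ω w X t i j) ^ 2)
      ≤ ∑ t, ∑ i, ∑ j, c₀ ^ 2 * (X t i j) ^ 2 := by
    apply Finset.sum_le_sum; intro t _
    apply Finset.sum_le_sum; intro i _
    apply Finset.sum_le_sum; intro j _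
    show (if (i, j, t) ∈ Ω then w (i, j, t) * X t i j else 0) ^ 2 ≤ _
    split_ifs with hmem
    · have h1 : w (i, j, t) ≤ c₀ := by
        rw [hc₀def]
        exact Finset.single_le_sum (fun idx h => (hw idx h).le) hmem
      have h2 : 0 < w (i, j, t) := hw _ hmem
      rw [mul_pow]
      apply mul_le_mul_of_nonneg_right _ (sq_nonneg _)
      apply pow_le_pow_left₀ h2.le h1
    · rw [zero_pow (by norm_num : 2 ≠ 0)]
      positivity
  calc Real.sqrt (∑ t, ∑ i, ∑ j, (ROp n T Ω w X t i j) ^ 2)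
      ≤ Real.sqrt (∑ t, ∑ i, ∑ j, c₀ ^ 2 * (X t i j) ^ 2) := Real.sqrt_le_sqrt hsum
  _ = c₀ * Real.sqrt (∑ t, ∑ i, ∑ j, (X t i j) ^ 2) := by
      simp only [← Finset.mul_sum]
      rw [Real.sqrt_mul (sq_nonneg c₀), Real.sqrt_sq hc₀]

lemma rop_ker (hw : ∀ idx ∈ Ω, 0 < w idx) (η : Fin T → Matrix (Fin n) (Fin n) ℝ)
    (hη : ROp n T Ω w η = 0) :
    ∀ i j t, (i, j, t) ∈ Ω → η t i j = 0 := by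
  intro i j t hmem
  have h := congrFun (congrFun (congrFun hη t) i) j
  show _ = _
  simp only [ROp, Matrix.of_apply] at h
  rw [if_pos hmem] at h
  have hw' := (hw _ hmem).ne'
  simp only [Pi.zero_apply, Matrix.zero_apply] at h
  exact (mul_eq_zero.1 h).resolve_left hw'

end RopLemmas
end LRIPAux


set_option maxHeartbeats 1000000
open LRIPAux


/-- Null-space property from the local restricted isometry property: if `H` has rank `r`
with tangent space `T_H` and `‖P_{T_H} G R_Ω G* P_{T_H} − P_{T_H} G G* P_{T_H}‖ ≤ 2/5`
then every `η` in the kernel of the sampling operator `R_Ω` satisfies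
`‖H(η)‖_F² ≤ (5/3)(‖R_Ω‖ + 8/5)‖P_{T_H^⊥} H(η)‖_F²`. -/
theorem localRIP_nullspace_property (n d1 d2 T r : ℕ)
    (hn : 1 ≤ n) (hd1 : 1 ≤ d1) (hd2 : 1 ≤ d2) (hT : T = d1 + d2 - 1)
    (Ω : Finset (Fin n × Fin n × Fin T)) (w : Fin n × Fin n × Fin T → ℝ)
    (hw : ∀ idx ∈ Ω, 0 < w idx)
    (H : Matrix (Fin d1 × Fin n) (Fin d2 × Fin n) ℝ) (hrH : H.rank = r)
    (U1 : Matrix (Fin d1 × Fin n) (Fin r) ℝ) (V1 : Matrix (Fin d2 × Fin n) (Fin r) ℝ)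
    (σ1 : Fin r → ℝ) (hσ1 : ∀ l, 0 < σ1 l)
    (hU1 : U1ᵀ * U1 = 1) (hV1 : V1ᵀ * V1 = 1)
    (hSVD1 : H = U1 * Matrix.diagonal σ1 * V1ᵀ)
    (hRIP : opNormM (fun M =>
        tanProj U1 V1 (Gop n d1 d2 T (ROp n T Ω w (Gstar n d1 d2 T (tanProj U1 V1 M))))
          - tanProj U1 V1 (Gop n d1 d2 T (Gstar n d1 d2 T (tanProj U1 V1 M)))) ≤ 2 / 5) :
    ∀ η : Fin T → Matrix (Fin n) (Fin n) ℝ, ROp n T Ω w η = 0 →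
      frobNorm (blockHankel n d1 d2 T η) ^ 2
        ≤ (5 / 3) * (opNormT (ROp n T Ω w) + 8 / 5)
          * frobNorm (blockHankel n d1 d2 T η
              - tanProj U1 V1 (blockHankel n d1 d2 T η)) ^ 2 := by
  intro η hη
  -- notation
  set A : Matrix (Fin d1 × Fin n) (Fin d2 × Fin n) ℝ → _ := fun M =>
      tanProj U1 V1 (Gop n d1 d2 T (ROp n T Ω w (Gstar n d1 d2 T (tanProj U1 V1 M))))
        - tanProj U1 V1 (Gop n d1 d2 T (Gstar n d1 d2 T (tanProj U1 V1 M))) with hAdef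
  set etat : Fin T → Matrix (Fin n) (Fin n) ℝ := fun t => Matrix.of fun i j =>
      frobNorm (blockHankel n d1 d2 T (Etuple n T i j t)) * η t i j with hetatdef
  have hrep : Gop n d1 d2 T etat = blockHankel n d1 d2 T η := gop_eta_rep hd1 hd2 hT η
  set Z : Matrix (Fin d1 × Fin n) (Fin d2 × Fin n) ℝ := blockHankel n d1 d2 T η with hZdef
  set Z1 : Matrix (Fin d1 × Fin n) (Fin d2 × Fin n) ℝ := tanProj U1 V1 Z with hZ1def
  set Z2 : Matrix (Fin d1 × Fin n) (Fin d2 × Fin n) ℝ := Z - Z1 with hZ2def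
  set X1 : Fin T → Matrix (Fin n) (Fin n) ℝ := Gstar n d1 d2 T Z1 with hX1def
  set X2 : Fin T → Matrix (Fin n) (Fin n) ℝ := Gstar n d1 d2 T Z2 with hX2def
  have hZ12 : Z = Z1 + Z2 := by rw [hZ2def]; abel
  have hPZ1 : tanProj U1 V1 Z1 = Z1 := tp_idem U1 V1 hU1 hV1 Z
  have hetat : Gstar n d1 d2 T Z = etat := by rw [← hrep, gstar_gop hd1 hd2 hT]
  have hX12 : etat = X1 + X2 := by
    rw [← hetat, hZ12, gstar_add]
  have hX1eq : X1 = etat - X2 := by rw [hX12]; abel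
  -- etat vanishes on Ω
  have hker := rop_ker Ω w hw η hη
  have hRetat : ROp n T Ω w etat = 0 := by
    funext t; ext i j
    show (if (i, j, t) ∈ Ω then w (i, j, t) * etat t i j else 0) = 0
    split_ifs with hmem
    · have : etat t i j = frobNorm (blockHankel n d1 d2 T (Etuple n T i j t)) * η t i j := rfl
      rw [this, hker i j t hmem, mul_zero, mul_zero]
    · rfl
  have ti_zero_left : ∀ Y : Fin T → Matrix (Fin n) (Fin n) ℝ, tInner 0 Y = 0 := by
    intro Y; simp [tInner]
  have ti_zero_right : ∀ Y : Fin T → Matrix (Fin n) (Fin n) ℝ, tInner Y 0 = 0 := by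
    intro Y; simp [tInner]
  -- orthogonality and Pythagoras
  have horth : frobInner Z1 Z2 = 0 := by
    have h1 : frobInner Z1 Z1 = frobInner Z Z1 := by
      rw [hZ1def]
      rw [tp_selfadj U1 V1 Z Z1, hPZ1]
    rw [hZ2def, fi_sub_right, h1, fi_comm Z Z1, sub_self]
  have hpyth : frobNorm Z ^ 2 = frobNorm Z1 ^ 2 + frobNorm Z2 ^ 2 := by
    rw [fn_sq, fn_sq, fn_sq, hZ12, fi_add_left, fi_add_right, fi_add_right, horth,
      fi_comm Z2 Z1, horth]
    ring
  -- bound on the operator norm witness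
  set cΩ : ℝ := ∑ idx ∈ Ω, w idx with hcΩdef
  have hcΩ : 0 ≤ cΩ := Finset.sum_nonneg (fun idx h => (hw idx h).le)
  have hb : ∀ M, frobNorm (A M) ≤ (cΩ + 1) * frobNorm M := by
    intro M
    have c1 : frobNorm (tanProj U1 V1
        (Gop n d1 d2 T (ROp n T Ω w (Gstar n d1 d2 T (tanProj U1 V1 M)))))
        ≤ cΩ * frobNorm M := by
      calc frobNorm (tanProj U1 V1
            (Gop n d1 d2 T (ROp n T Ω w (Gstar n d1 d2 T (tanProj U1 V1 M)))))
          ≤ frobNorm (Gop n d1 d2 T (ROp n T Ω w (Gstar n d1 d2 T (tanProj U1 V1 M)))) :=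
            tp_contract U1 V1 hU1 hV1 _
        _ = tupNorm (ROp n T Ω w (Gstar n d1 d2 T (tanProj U1 V1 M))) :=
            fn_gop hd1 hd2 hT _
        _ ≤ cΩ * tupNorm (Gstar n d1 d2 T (tanProj U1 V1 M)) := rop_norm_le Ω w hw _
        _ ≤ cΩ * frobNorm (tanProj U1 V1 M) :=
            mul_le_mul_of_nonneg_left (bessel hd1 hd2 hT _) hcΩ
        _ ≤ cΩ * frobNorm M :=
            mul_le_mul_of_nonneg_left (tp_contract U1 V1 hU1 hV1 _) hcΩ
    have c2 : frobNorm (tanProj U1 V1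
        (Gop n d1 d2 T (Gstar n d1 d2 T (tanProj U1 V1 M)))) ≤ 1 * frobNorm M := by
      calc frobNorm (tanProj U1 V1 (Gop n d1 d2 T (Gstar n d1 d2 T (tanProj U1 V1 M))))
          ≤ frobNorm (Gop n d1 d2 T (Gstar n d1 d2 T (tanProj U1 V1 M))) :=
            tp_contract U1 V1 hU1 hV1 _
        _ = tupNorm (Gstar n d1 d2 T (tanProj U1 V1 M)) := fn_gop hd1 hd2 hT _
        _ ≤ frobNorm (tanProj U1 V1 M) := bessel hd1 hd2 hT _
        _ ≤ frobNorm M := tp_contract U1 V1 hU1 hV1 _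
        _ = 1 * frobNorm M := (one_mul _).symm
    have hAM : A M = tanProj U1 V1
        (Gop n d1 d2 T (ROp n T Ω w (Gstar n d1 d2 T (tanProj U1 V1 M))))
        - tanProj U1 V1 (Gop n d1 d2 T (Gstar n d1 d2 T (tanProj U1 V1 M))) := by
      simp only [hAdef]
    rw [hAM]
    calc frobNorm (tanProj U1 V1
          (Gop n d1 d2 T (ROp n T Ω w (Gstar n d1 d2 T (tanProj U1 V1 M))))
          - tanProj U1 V1 (Gop n d1 d2 T (Gstar n d1 d2 T (tanProj U1 V1 M))))
        ≤ frobNorm (tanProj U1 V1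
            (Gop n d1 d2 T (ROp n T Ω w (Gstar n d1 d2 T (tanProj U1 V1 M)))))
          + frobNorm (tanProj U1 V1
              (Gop n d1 d2 T (Gstar n d1 d2 T (tanProj U1 V1 M)))) := fn_sub_le _ _
    _ ≤ cΩ * frobNorm M + 1 * frobNorm M := add_le_add c1 c2
    _ = (cΩ + 1) * frobNorm M := by ring
  have hAZ1 : frobNorm (A Z1) ≤ 2 / 5 * frobNorm Z1 := by
    calc frobNorm (A Z1) ≤ opNormM A * frobNorm Z1 :=
        opNormM_bound (by linarith : (0:ℝ) ≤ cΩ + 1) hb Z1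
    _ ≤ 2 / 5 * frobNorm Z1 := mul_le_mul_of_nonneg_right hRIP (fn_nonneg Z1)
  -- identity for the RIP quadratic form
  have hAid : frobInner (A Z1) Z1 = tInner (ROp n T Ω w X1) X1 - tInner X1 X1 := by
    have e1 : A Z1 = tanProj U1 V1 (Gop n d1 d2 T (ROp n T Ω w X1))
        - tanProj U1 V1 (Gop n d1 d2 T X1) := by
      rw [hAdef]; simp only [hPZ1, hX1def]
    rw [e1, fi_sub_left]
    rw [tp_selfadj U1 V1 _ Z1, hPZ1, tp_selfadj U1 V1 _ Z1, hPZ1]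
    rw [fi_gop, fi_gop, ← hX1def]
  have step1 : tInner X1 X1 - tInner (ROp n T Ω w X1) X1 ≤ 2 / 5 * frobNorm Z1 ^ 2 := by
    have h1 : |frobInner (A Z1) Z1| ≤ frobNorm (A Z1) * frobNorm Z1 := fi_abs_cauchy _ _
    have h2 : frobNorm (A Z1) * frobNorm Z1 ≤ 2 / 5 * frobNorm Z1 ^ 2 := by
      have := mul_le_mul_of_nonneg_right hAZ1 (fn_nonneg Z1)
      nlinarith [fn_nonneg Z1]
    have h3 : -(frobInner (A Z1) Z1) ≤ |frobInner (A Z1) Z1| := neg_le_abs _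
    have h4 : tInner X1 X1 - tInner (ROp n T Ω w X1) X1 = -(frobInner (A Z1) Z1) := by
      rw [hAid]; ring
    linarith
  -- step 2
  have step2 : tInner (ROp n T Ω w X1) X1 = tInner (ROp n T Ω w X2) X2 := by
    rw [hX1eq, rop_sub, hRetat, ti_sub_left, ti_zero_left, ti_sub_right]
    rw [rop_symm Ω w X2 etat, hRetat, ti_zero_right]
    ring
  have step2b : tInner (ROp n T Ω w X2) X2
      ≤ opNormT (ROp n T Ω w) * frobNorm Z2 ^ 2 := by
    have hq := opNormT_nonneg (ROp n T Ω w)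
    have h1 : tInner (ROp n T Ω w X2) X2 ≤ tupNorm (ROp n T Ω w X2) * tupNorm X2 :=
      ti_cauchy _ _
    have h2 : tupNorm (ROp n T Ω w X2) ≤ opNormT (ROp n T Ω w) * tupNorm X2 :=
      opNormT_bound hcΩ (rop_norm_le Ω w hw) X2
    have h3 : tupNorm X2 ≤ frobNorm Z2 := bessel hd1 hd2 hT Z2
    have h4 : tupNorm (ROp n T Ω w X2) * tupNorm X2
        ≤ opNormT (ROp n T Ω w) * tupNorm X2 * tupNorm X2 :=
      mul_le_mul_of_nonneg_right h2 (tn_nonneg X2)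
    have h5 : tupNorm X2 * tupNorm X2 ≤ frobNorm Z2 * frobNorm Z2 :=
      mul_le_mul h3 h3 (tn_nonneg X2) (fn_nonneg Z2)
    have h6 : opNormT (ROp n T Ω w) * (tupNorm X2 * tupNorm X2)
        ≤ opNormT (ROp n T Ω w) * (frobNorm Z2 * frobNorm Z2) :=
      mul_le_mul_of_nonneg_left h5 hq
    calc tInner (ROp n T Ω w X2) X2 ≤ tupNorm (ROp n T Ω w X2) * tupNorm X2 := h1
    _ ≤ opNormT (ROp n T Ω w) * tupNorm X2 * tupNorm X2 := h4
    _ = opNormT (ROp n T Ω w) * (tupNorm X2 * tupNorm X2) := by ring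
    _ ≤ opNormT (ROp n T Ω w) * (frobNorm Z2 * frobNorm Z2) := h6
    _ = opNormT (ROp n T Ω w) * frobNorm Z2 ^ 2 := by ring
  -- step 3
  have hee : tInner etat etat = frobNorm Z ^ 2 := by
    rw [fn_sq, ← hrep, fi_gop_gop hd1 hd2 hT]
  have heX2 : tInner etat X2 = frobNorm Z2 ^ 2 := by
    rw [hX2def, ← fi_gop, hrep]
    rw [hZ12, fi_add_left, horth, zero_add, fn_sq]
  have step3 : frobNorm Z ^ 2 - 2 * frobNorm Z2 ^ 2 ≤ tInner X1 X1 := by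
    have e : tInner X1 X1 = tInner etat etat - 2 * tInner etat X2 + tInner X2 X2 := by
      rw [hX1eq, ti_sub_left, ti_sub_right, ti_sub_right, ti_comm X2 etat]
      ring
    rw [e, hee, heX2]
    have := ti_self_nonneg X2
    linarith
  -- conclude
  have key : 3 / 5 * frobNorm Z ^ 2
      ≤ opNormT (ROp n T Ω w) * frobNorm Z2 ^ 2 + 8 / 5 * frobNorm Z2 ^ 2 := by
    have h1 := step1
    rw [step2] at h1
    linarith [hpyth, step3, step2b]
  show frobNorm Z ^ 2 ≤ 5 / 3 * (opNormT (ROp n T Ω w) + 8 / 5) * frobNorm Z2 ^ 2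
  rw [show (5:ℝ) / 3 * (opNormT (ROp n T Ω w) + 8 / 5) * frobNorm Z2 ^ 2
      = 5 / 3 * (opNormT (ROp n T Ω w) * frobNorm Z2 ^ 2) + 8 / 3 * frobNorm Z2 ^ 2
    from by ring]
  linarith

end
end

section
/- Let n, T ≥ 1 with n·√T ≥ 9, let I = [n]×[n]×[T], let m < n²·T, and let β > 1. Let ω_1, …, ω_m be independent random indices, each uniformly distributed on I. Then with probability at least 1 − (n²T)^{1−β}, every element of I occurs fewer than (8/3)·β·log(n·T) times among ω_1, …, ω_m. Consequently, with probability at least 1 − (n²T)^{1−β}, the random operator R_Ω on T-tuples of real n×n matrices defined by R_Ω(L) = (n²T/m)·Σ_{ℓ=1}^m ⟨E_{ω_ℓ}, L⟩_F·E_{ω_ℓ} satisfies ‖R_Ω‖ ≤ (8/3)·β·(n²T/m)·log(n·T), where ‖R_Ω‖ is the operator norm with respect to the Frobenius norm. -/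
noncomputable section

open Matrix

/-- The sampling operator of `m` i.i.d. uniform space-time indices `ω_1,…,ω_m`:
`R_Ω(L) = (n²T/m)·Σ_ℓ ⟨E_{ω_ℓ}, L⟩_F·E_{ω_ℓ}`. -/
def RUnif (n T m : ℕ) (ω : Fin m → Fin n × Fin n × Fin T)
    (L : Fin T → Matrix (Fin n) (Fin n) ℝ) : Fin T → Matrix (Fin n) (Fin n) ℝ :=
  fun t => Matrix.of fun i j =>
    ((n : ℝ) ^ 2 * (T : ℝ) / (m : ℝ)) * ∑ ℓ : Fin m, if ω ℓ = (i, j, t) then L t i j else 0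

lemma pow_div_exp_le_factorial (k : ℕ) : ((k : ℝ) / Real.exp 1) ^ k ≤ k.factorial := by
  induction k with
  | zero => norm_num
  | succ k ih =>
    have e1 : (1:ℝ) ≤ Real.exp 1 := by
      have := Real.add_one_le_exp (1:ℝ); linarith
    rcases Nat.eq_zero_or_pos k with hk | hk
    · subst hk
      have h0 : (1:ℝ)/Real.exp 1 ≤ 1 := by
        rw [div_le_one (Real.exp_pos 1)]; linarith
      simpa using h0
    · have hkpos : (0:ℝ) < k := by exact_mod_cast hk
      have h2 : (((k:ℝ)+1)/(k:ℝ)) ^ k ≤ Real.exp 1 := by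
        have hstep : ((k:ℝ)+1)/(k:ℝ) ≤ Real.exp (1/(k:ℝ)) := by
          rw [add_div, div_self hkpos.ne']
          have := Real.add_one_le_exp (1/(k:ℝ))
          linarith
        have h3 : Real.exp (1/(k:ℝ)) ^ k = Real.exp 1 := by
          rw [← Real.exp_nat_mul]
          congr 1
          field_simp
        calc (((k:ℝ)+1)/(k:ℝ)) ^ k ≤ Real.exp (1/(k:ℝ)) ^ k :=
              pow_le_pow_left₀ (by positivity) hstep k
          _ = Real.exp 1 := h3
      have h1 : (((k:ℝ)+1) / Real.exp 1) ^ k ≤ Real.exp 1 * ((k:ℝ) / Real.exp 1) ^ k := by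
        have heq : (((k:ℝ)+1) / Real.exp 1) ^ k
            = (((k:ℝ)+1)/(k:ℝ)) ^ k * ((k:ℝ) / Real.exp 1) ^ k := by
          rw [← mul_pow]; congr 1; field_simp
        rw [heq]
        exact mul_le_mul_of_nonneg_right h2 (by positivity)
      have key : (((k:ℝ)+1) / Real.exp 1) ^ (k+1) ≤ ((k:ℝ)+1) * ((k:ℝ) / Real.exp 1) ^ k := by
        have heq2 : (((k:ℝ)+1) / Real.exp 1) ^ (k+1)
            = (((k:ℝ)+1) / Real.exp 1) * (((k:ℝ)+1) / Real.exp 1) ^ k := by ring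
        rw [heq2]
        have := mul_le_mul_of_nonneg_left h1 (show (0:ℝ) ≤ ((k:ℝ)+1)/Real.exp 1 by positivity)
        calc (((k:ℝ)+1) / Real.exp 1) * (((k:ℝ)+1) / Real.exp 1) ^ k
            ≤ (((k:ℝ)+1) / Real.exp 1) * (Real.exp 1 * ((k:ℝ) / Real.exp 1) ^ k) := this
          _ = ((k:ℝ)+1) * ((k:ℝ) / Real.exp 1) ^ k := by
              field_simp
      have hfin : ((k:ℝ)+1) * ((k:ℝ) / Real.exp 1) ^ k ≤ ((k+1).factorial : ℝ) := by
        rw [Nat.factorial_succ]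
        push_cast
        exact mul_le_mul_of_nonneg_left ih (by positivity)
      push_cast
      exact le_trans key hfin

lemma exp_7_4_lt : Real.exp (7/4) ≤ 5.76 := by
  have h7 : Real.exp 7 ≤ 5.76 ^ 4 := by
    have : Real.exp 7 = (Real.exp 1) ^ 7 := by
      rw [← Real.exp_nat_mul]; norm_num
    rw [this]
    have he : Real.exp 1 ≤ 2.7182818286 := le_of_lt Real.exp_one_lt_d9
    calc (Real.exp 1) ^ 7 ≤ (2.7182818286:ℝ) ^ 7 :=
          pow_le_pow_left₀ (Real.exp_pos 1).le he 7
      _ ≤ 5.76 ^ 4 := by norm_num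
  have h4 : Real.exp (7/4) ^ 4 = Real.exp 7 := by
    rw [← Real.exp_nat_mul]; norm_num
  nlinarith [Real.exp_pos (7/4), sq_nonneg (Real.exp (7/4)), sq_nonneg (Real.exp (7/4) - 5.76),
    sq_nonneg (Real.exp (7/4) + 5.76)]

lemma log_three_lb : (1.08 : ℝ) ≤ Real.log 3 := by
  rw [show (1.08:ℝ) = 27/25 by norm_num, Real.le_log_iff_exp_le (by norm_num : (0:ℝ) < 3)]
  have h27 : Real.exp 27 ≤ 3 ^ 25 := by
    have : Real.exp 27 = (Real.exp 1) ^ 27 := by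
      rw [← Real.exp_nat_mul]; norm_num
    rw [this]
    have he : Real.exp 1 ≤ 2.7182818286 := le_of_lt Real.exp_one_lt_d9
    calc (Real.exp 1) ^ 27 ≤ (2.7182818286:ℝ) ^ 27 :=
          pow_le_pow_left₀ (Real.exp_pos 1).le he 27
      _ ≤ 3 ^ 25 := by norm_num
  have h4 : Real.exp (27/25) ^ 25 = Real.exp 27 := by
    rw [← Real.exp_nat_mul]; norm_num
  by_contra hc
  push_neg at hc
  have : (3:ℝ)^25 < Real.exp (27/25) ^ 25 :=
    pow_lt_pow_left₀ hc (by norm_num) (by norm_num)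
  rw [h4] at this
  linarith

lemma key_factorial_bound (N L β : ℝ) (hL : 2 * Real.log 3 ≤ L) (hβ : 1 ≤ β)
    (hN : 0 < N) (hlogN : Real.log N ≤ 2 * L) :
    N ^ β ≤ ((⌈(8/3)*β*L⌉₊ : ℕ).factorial : ℝ) := by
  set k : ℕ := ⌈(8/3)*β*L⌉₊ with hkdef
  have hlog3 : (1.08:ℝ) ≤ Real.log 3 := log_three_lb
  have hLpos : (0:ℝ) < L := by linarith
  have hK : (8/3)*β*L ≤ (k:ℝ) := Nat.le_ceil _
  have hkK : Real.exp (7/4) ≤ (k:ℝ) := by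
    have h1 : Real.exp (7/4) ≤ (16/3) * Real.log 3 := by
      have := exp_7_4_lt
      nlinarith
    have h2 : (16/3) * Real.log 3 ≤ (8/3)*β*L := by nlinarith
    linarith
  have hkpos : (0:ℝ) < (k:ℝ) := lt_of_lt_of_le (Real.exp_pos _) hkK
  have hlogk : (7/4:ℝ) ≤ Real.log k := by
    rw [← Real.le_log_iff_exp_le hkpos] at hkK
    exact hkK
  have hmain : Real.log N * β ≤ (k:ℝ) * (Real.log k - 1) := by
    have h1 : Real.log N * β ≤ 2 * L * β := by
      have hβpos : (0:ℝ) < β := by linarith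
      nlinarith
    have h2 : 2 * L * β = (3/4) * ((8/3)*β*L) := by ring
    have h3 : (3/4:ℝ) * ((8/3)*β*L) ≤ (3/4) * (k:ℝ) := by
      have : (0:ℝ) < (8/3)*β*L := by nlinarith
      nlinarith
    have h4 : (3/4:ℝ) * (k:ℝ) ≤ (k:ℝ) * (Real.log k - 1) := by nlinarith
    linarith
  have hNpow : N ^ β = Real.exp (Real.log N * β) := Real.rpow_def_of_pos hN β
  have hpow : ((k:ℝ) / Real.exp 1) ^ k = Real.exp ((k:ℝ) * (Real.log k - 1)) := by
    have hq : (0:ℝ) < (k:ℝ) / Real.exp 1 := by positivity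
    rw [← Real.exp_log (pow_pos hq k), Real.log_pow, Real.log_div hkpos.ne' (Real.exp_pos 1).ne',
      Real.log_exp]
  calc N ^ β = Real.exp (Real.log N * β) := hNpow
    _ ≤ Real.exp ((k:ℝ) * (Real.log k - 1)) := Real.exp_le_exp.mpr hmain
    _ = ((k:ℝ) / Real.exp 1) ^ k := hpow.symm
    _ ≤ (k.factorial : ℝ) := pow_div_exp_le_factorial k

lemma count_card_le (γ : Type*) [Fintype γ] [DecidableEq γ] (c : γ) (k m : ℕ) :
    (Finset.univ.filter fun ω : Fin m → γ =>
        k ≤ (Finset.univ.filter fun ℓ => ω ℓ = c).card).card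
      ≤ m.choose k * (Fintype.card γ) ^ (m - k) := by
  classical
  set A : Finset (Fin m) → Finset (Fin m → γ) :=
    fun S => Finset.univ.filter (fun ω => ∀ ℓ ∈ S, ω ℓ = c) with hA
  have hsub : (Finset.univ.filter fun ω : Fin m → γ =>
      k ≤ (Finset.univ.filter fun ℓ => ω ℓ = c).card)
      ⊆ (Finset.powersetCard k Finset.univ).biUnion A := by
    intro ω hω
    rw [Finset.mem_filter] at hω
    obtain ⟨S, hSsub, hScard⟩ := Finset.exists_subset_card_eq hω.2
    rw [Finset.mem_biUnion]
    refine ⟨S, ?_, ?_⟩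
    · rw [Finset.mem_powersetCard]
      exact ⟨Finset.subset_univ S, hScard⟩
    · rw [hA, Finset.mem_filter]
      refine ⟨Finset.mem_univ _, fun ℓ hℓ => ?_⟩
      have := hSsub hℓ
      rw [Finset.mem_filter] at this
      exact this.2
  have hAcard : ∀ S ∈ Finset.powersetCard k Finset.univ,
      (A S).card ≤ (Fintype.card γ) ^ (m - k) := by
    intro S hS
    rw [Finset.mem_powersetCard] at hS
    have : (A S).card ≤ (Finset.univ : Finset ((↥(Sᶜ) : Type) → γ)).card := by
      apply Finset.card_le_card_of_injOn (fun ω x => ω x.1)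
      · intro ω _; exact Finset.mem_univ _
      · intro ω₁ h₁ ω₂ h₂ heq
        simp only [Finset.mem_coe, hA, Finset.mem_filter] at h₁ h₂
        funext ℓ
        by_cases hℓ : ℓ ∈ S
        · rw [h₁.2 ℓ hℓ, h₂.2 ℓ hℓ]
        · have hmem : ℓ ∈ Sᶜ := Finset.mem_compl.mpr hℓ
          exact congrFun heq ⟨ℓ, hmem⟩
    calc (A S).card ≤ (Finset.univ : Finset ((↥(Sᶜ) : Type) → γ)).card := this
      _ = (Fintype.card γ) ^ (m - k) := by
          rw [Finset.card_univ, Fintype.card_fun, Fintype.card_coe, Finset.card_compl,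
            Fintype.card_fin, hS.2]
  calc (Finset.univ.filter fun ω : Fin m → γ =>
        k ≤ (Finset.univ.filter fun ℓ => ω ℓ = c).card).card
      ≤ ((Finset.powersetCard k Finset.univ).biUnion A).card := Finset.card_le_card hsub
    _ ≤ ∑ S ∈ Finset.powersetCard k Finset.univ, (A S).card := Finset.card_biUnion_le
    _ ≤ ∑ _S ∈ Finset.powersetCard k Finset.univ, (Fintype.card γ) ^ (m - k) :=
        Finset.sum_le_sum hAcard
    _ = m.choose k * (Fintype.card γ) ^ (m - k) := by
        rw [Finset.sum_const, smul_eq_mul, Finset.card_powersetCard, Finset.card_univ,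
          Fintype.card_fin]

set_option maxHeartbeats 1000000

/-- With `ω_1,…,ω_m` i.i.d. uniform on `I = [n]×[n]×[T]` (formulated by counting
realizations `ω : Fin m → I`, each of the `(n²T)^m` realizations being equally likely),
with probability at least `1 − (n²T)^{1−β}` every index of `I` occurs fewer than
`(8/3)β·log(nT)` times among `ω_1,…,ω_m`; consequently, with probability at least
`1 − (n²T)^{1−β}` the sampling operator `R_Ω` satisfies
`‖R_Ω‖ ≤ (8/3)β(n²T/m)·log(nT)`. -/
theorem uniform_sampling_repetition_bound (n T m : ℕ) (hn : 1 ≤ n) (hT : 1 ≤ T)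
    (h9 : (9 : ℝ) ≤ (n : ℝ) * Real.sqrt (T : ℝ)) (hm : m < n ^ 2 * T)
    (β : ℝ) (hβ : 1 < β) :
    ((Nat.card {ω : Fin m → Fin n × Fin n × Fin T //
          ∀ idx : Fin n × Fin n × Fin T,
            ((Finset.univ.filter fun ℓ => ω ℓ = idx).card : ℝ)
              < (8 / 3) * β * Real.log ((n : ℝ) * (T : ℝ))} : ℝ)
        ≥ (1 - ((n : ℝ) ^ 2 * (T : ℝ)) ^ ((1 : ℝ) - β)) * ((n : ℝ) ^ 2 * (T : ℝ)) ^ m) ∧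
      ((Nat.card {ω : Fin m → Fin n × Fin n × Fin T //
          opNormT (RUnif n T m ω)
            ≤ (8 / 3) * β * ((n : ℝ) ^ 2 * (T : ℝ) / (m : ℝ))
              * Real.log ((n : ℝ) * (T : ℝ))} : ℝ)
        ≥ (1 - ((n : ℝ) ^ 2 * (T : ℝ)) ^ ((1 : ℝ) - β)) * ((n : ℝ) ^ 2 * (T : ℝ)) ^ m) := by
  classical
  set L : ℝ := Real.log ((n : ℝ) * (T : ℝ)) with hLdef
  set K : ℝ := (8 / 3) * β * L with hKdef
  set k : ℕ := ⌈K⌉₊ with hkdef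
  set Nn : ℕ := n ^ 2 * T with hNndef
  set Nr : ℝ := (n : ℝ) ^ 2 * (T : ℝ) with hNrdef
  have hn1 : (1:ℝ) ≤ (n:ℝ) := by exact_mod_cast hn
  have hT1 : (1:ℝ) ≤ (T:ℝ) := by exact_mod_cast hT
  have hsqrtT : Real.sqrt (T:ℝ) ≤ (T:ℝ) := by
    nlinarith [Real.sq_sqrt (by linarith : (0:ℝ) ≤ (T:ℝ)), Real.sqrt_nonneg (T:ℝ)]
  have hnT9 : (9:ℝ) ≤ (n:ℝ) * (T:ℝ) := by nlinarith [Real.sqrt_nonneg (T:ℝ)]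
  have hL : 2 * Real.log 3 ≤ L := by
    have h1 : Real.log 9 ≤ L := Real.log_le_log (by norm_num) hnT9
    have h2 : Real.log 9 = 2 * Real.log 3 := by
      rw [show (9:ℝ) = 3 ^ 2 by norm_num, Real.log_pow]
      push_cast; ring
    linarith
  have hLpos : (0:ℝ) < L := by
    have := log_three_lb; linarith
  have hNrpos : (0:ℝ) < Nr := by rw [hNrdef]; positivity
  have hlogN : Real.log Nr ≤ 2 * L := by
    have hrw : Nr = (n:ℝ) * ((n:ℝ) * (T:ℝ)) := by rw [hNrdef]; ring
    rw [hrw, Real.log_mul (by linarith) (by nlinarith)]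
    have h1 : Real.log (n:ℝ) ≤ L := by
      apply Real.log_le_log (by linarith)
      nlinarith
    linarith
  have hβ1 : (1:ℝ) ≤ β := hβ.le
  have hfact : Nr ^ β ≤ ((k.factorial : ℕ) : ℝ) :=
    key_factorial_bound Nr L β hL hβ1 hNrpos hlogN
  have hcardγ : Fintype.card (Fin n × Fin n × Fin T) = Nn := by
    simp only [Fintype.card_prod, Fintype.card_fin, hNndef]; ring
  set P : (Fin m → Fin n × Fin n × Fin T) → Prop := fun ω => ∀ idx : Fin n × Fin n × Fin T,
      ((Finset.univ.filter fun ℓ => ω ℓ = idx).card : ℝ) < K with hPdef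
  have hbadsub : (Finset.univ.filter fun ω : Fin m → Fin n × Fin n × Fin T => ¬ P ω)
      ⊆ Finset.univ.biUnion (fun idx : Fin n × Fin n × Fin T =>
          Finset.univ.filter fun ω : Fin m → Fin n × Fin n × Fin T =>
            k ≤ (Finset.univ.filter fun ℓ => ω ℓ = idx).card) := by
    intro ω hω
    rw [Finset.mem_filter] at hω
    have hnp := hω.2
    simp only [hPdef, not_forall, not_lt] at hnp
    obtain ⟨idx, hidx⟩ := hnp
    rw [Finset.mem_biUnion]
    refine ⟨idx, Finset.mem_univ _, ?_⟩
    rw [Finset.mem_filter]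
    exact ⟨Finset.mem_univ _, Nat.ceil_le.mpr hidx⟩
  have hbadnat : (Finset.univ.filter fun ω : Fin m → Fin n × Fin n × Fin T => ¬ P ω).card
      ≤ Nn * (m.choose k * Nn ^ (m - k)) := by
    calc (Finset.univ.filter fun ω : Fin m → Fin n × Fin n × Fin T => ¬ P ω).card
        ≤ (Finset.univ.biUnion (fun idx : Fin n × Fin n × Fin T =>
            Finset.univ.filter fun ω : Fin m → Fin n × Fin n × Fin T =>
              k ≤ (Finset.univ.filter fun ℓ => ω ℓ = idx).card)).card :=
          Finset.card_le_card hbadsub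
      _ ≤ ∑ idx : Fin n × Fin n × Fin T, (Finset.univ.filter
            fun ω : Fin m → Fin n × Fin n × Fin T =>
              k ≤ (Finset.univ.filter fun ℓ => ω ℓ = idx).card).card :=
          Finset.card_biUnion_le
      _ ≤ ∑ _idx : Fin n × Fin n × Fin T, m.choose k * Nn ^ (m - k) := by
          apply Finset.sum_le_sum
          intro idx _
          have := count_card_le (Fin n × Fin n × Fin T) idx k m
          rwa [hcardγ] at this
      _ = Nn * (m.choose k * Nn ^ (m - k)) := by
          rw [Finset.sum_const, Finset.card_univ, hcardγ, smul_eq_mul]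
  have hNnNr : ((Nn : ℕ) : ℝ) = Nr := by rw [hNndef, hNrdef]; push_cast; ring
  have hbadR : ((Finset.univ.filter fun ω : Fin m → Fin n × Fin n × Fin T => ¬ P ω).card : ℝ)
      ≤ Nr ^ ((1:ℝ) - β) * Nr ^ m := by
    have hrpow_eq : Nr ^ ((1:ℝ) - β) * Nr ^ m = Nr ^ (m+1) / Nr ^ β := by
      rw [← Real.rpow_natCast Nr m, ← Real.rpow_add hNrpos, ← Real.rpow_natCast Nr (m+1),
        ← Real.rpow_sub hNrpos]
      congr 1
      push_cast; ring
    rcases le_or_gt k m with hkm | hkm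
    · have h1 : ((Finset.univ.filter fun ω : Fin m → Fin n × Fin n × Fin T => ¬ P ω).card : ℝ)
          ≤ Nr * ((m.choose k : ℝ) * Nr ^ (m - k)) := by
        have hcast : ((Nn * (m.choose k * Nn ^ (m - k)) : ℕ) : ℝ)
            = Nr * ((m.choose k : ℝ) * Nr ^ (m - k)) := by
          push_cast [hNnNr]; ring
        calc ((Finset.univ.filter fun ω : Fin m → Fin n × Fin n × Fin T => ¬ P ω).card : ℝ)
            ≤ ((Nn * (m.choose k * Nn ^ (m - k)) : ℕ) : ℝ) := by exact_mod_cast hbadnat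
          _ = Nr * ((m.choose k : ℝ) * Nr ^ (m - k)) := hcast
      have hfactpos : (0:ℝ) < (k.factorial : ℝ) := by exact_mod_cast k.factorial_pos
      have hchoose : (m.choose k : ℝ) ≤ Nr ^ k / (k.factorial : ℝ) := by
        have h2 : (m.choose k : ℝ) ≤ ((m:ℝ)) ^ k / (k.factorial : ℝ) :=
          Nat.choose_le_pow_div k m
        have hmN : (m:ℝ) ≤ Nr := by
          rw [← hNnNr]; exact_mod_cast hm.le
        have h3 : ((m:ℝ)) ^ k ≤ Nr ^ k :=
          pow_le_pow_left₀ (by positivity) hmN k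
        calc (m.choose k : ℝ) ≤ ((m:ℝ)) ^ k / (k.factorial : ℝ) := h2
          _ ≤ Nr ^ k / (k.factorial : ℝ) := by gcongr
      have hpowsplit : Nr ^ k * Nr ^ (m - k) = Nr ^ m := by
        rw [← pow_add]; congr 1; omega
      have h4 : Nr * ((m.choose k : ℝ) * Nr ^ (m - k)) ≤ Nr ^ (m+1) / (k.factorial : ℝ) := by
        calc Nr * ((m.choose k : ℝ) * Nr ^ (m - k))
            ≤ Nr * ((Nr ^ k / (k.factorial : ℝ)) * Nr ^ (m - k)) := by
              apply mul_le_mul_of_nonneg_left _ hNrpos.le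
              exact mul_le_mul_of_nonneg_right hchoose (by positivity)
          _ = (Nr ^ k * Nr ^ (m - k)) * Nr / (k.factorial : ℝ) := by ring
          _ = Nr ^ m * Nr / (k.factorial : ℝ) := by rw [hpowsplit]
          _ = Nr ^ (m+1) / (k.factorial : ℝ) := by ring
      have h5 : Nr ^ (m+1) / (k.factorial : ℝ) ≤ Nr ^ (m+1) / Nr ^ β :=
        div_le_div_of_nonneg_left (by positivity) (Real.rpow_pos_of_pos hNrpos β) hfact
      rw [hrpow_eq]
      linarith
    · have hzero : m.choose k = 0 := Nat.choose_eq_zero_of_lt hkm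
      have hz : (Finset.univ.filter fun ω : Fin m → Fin n × Fin n × Fin T => ¬ P ω).card = 0 := by
        have := hbadnat
        rw [hzero] at this
        simpa using this
      rw [hz]
      simp only [Nat.cast_zero]
      positivity
  -- total and good cardinalities
  have htotal : (Finset.univ : Finset (Fin m → Fin n × Fin n × Fin T)).card = Nn ^ m := by
    rw [Finset.card_univ, Fintype.card_fun, hcardγ, Fintype.card_fin]
  have hsplit : (Finset.univ.filter P).card
      + (Finset.univ.filter fun ω => ¬ P ω).card = Nn ^ m := by
    rw [Finset.card_filter_add_card_filter_not, htotal]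
  have hbadle : (Finset.univ.filter fun ω => ¬ P ω).card ≤ Nn ^ m := by omega
  have hgoodR : ((Finset.univ.filter P).card : ℝ)
      ≥ (1 - Nr ^ ((1:ℝ) - β)) * Nr ^ m := by
    have hNnm : ((Nn ^ m : ℕ) : ℝ) = Nr ^ m := by
      push_cast [hNnNr]; ring
    have hgood : (Finset.univ.filter P).card = Nn ^ m - (Finset.univ.filter fun ω => ¬ P ω).card := by
      omega
    rw [hgood, Nat.cast_sub hbadle, hNnm]
    nlinarith [hbadR]
  have hcard1 : Nat.card {ω : Fin m → Fin n × Fin n × Fin T // P ω}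
      = (Finset.univ.filter P).card := by
    rw [Nat.card_eq_fintype_card, Fintype.card_subtype]
  constructor
  · rw [show (Nat.card {ω : Fin m → Fin n × Fin n × Fin T //
        ∀ idx : Fin n × Fin n × Fin T,
          ((Finset.univ.filter fun ℓ => ω ℓ = idx).card : ℝ) < K})
        = (Finset.univ.filter P).card from hcard1]
    exact hgoodR
  · -- second part
    set c : ℝ := (8 / 3) * β * (Nr / (m:ℝ)) * L with hcdef
    have hβ0 : (0:ℝ) ≤ β := by linarith
    have hdivnn : (0:ℝ) ≤ Nr / (m:ℝ) := by positivity
    have hc0 : 0 ≤ c := by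
      rw [hcdef]
      exact mul_nonneg (mul_nonneg (mul_nonneg (by norm_num) hβ0) hdivnn) hLpos.le
    have himp : ∀ ω : Fin m → Fin n × Fin n × Fin T, P ω →
        opNormT (RUnif n T m ω) ≤ c := by
      intro ω hP
      have hmem : c ∈ {c' : ℝ | 0 ≤ c' ∧ ∀ X, tupNorm (RUnif n T m ω X) ≤ c' * tupNorm X} := by
        refine ⟨hc0, fun X => ?_⟩
        have hentry : ∀ (t : Fin T) (i j : Fin n),
            RUnif n T m ω X t i j
              = (Nr / (m:ℝ)) * (((Finset.univ.filter fun ℓ => ω ℓ = (i, j, t)).card : ℝ)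
                  * X t i j) := by
          intro t i j
          show (Nr / (m:ℝ)) * (∑ ℓ : Fin m, if ω ℓ = (i, j, t) then X t i j else 0) = _
          congr 1
          rw [← Finset.sum_filter, Finset.sum_const, nsmul_eq_mul]
        have hsq : ∀ (t : Fin T) (i j : Fin n),
            (RUnif n T m ω X t i j) ^ 2 ≤ c ^ 2 * (X t i j) ^ 2 := by
          intro t i j
          rw [hentry t i j]
          have ha0 : (0:ℝ) ≤ (Nr / (m:ℝ))
              * ((Finset.univ.filter fun ℓ => ω ℓ = (i, j, t)).card : ℝ) := by positivity
          have hac : (Nr / (m:ℝ))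
              * ((Finset.univ.filter fun ℓ => ω ℓ = (i, j, t)).card : ℝ) ≤ c := by
            have hcnt := (hP (i, j, t)).le
            have hdiv : (0:ℝ) ≤ Nr / (m:ℝ) := by positivity
            have := mul_le_mul_of_nonneg_left hcnt hdiv
            calc (Nr / (m:ℝ)) * ((Finset.univ.filter fun ℓ => ω ℓ = (i, j, t)).card : ℝ)
                ≤ (Nr / (m:ℝ)) * K := this
              _ = c := by rw [hcdef, hKdef]; ring
          have h1 : ((Nr / (m:ℝ)) * (((Finset.univ.filter fun ℓ => ω ℓ = (i, j, t)).card : ℝ)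
              * X t i j)) ^ 2
              = ((Nr / (m:ℝ)) * ((Finset.univ.filter fun ℓ => ω ℓ = (i, j, t)).card : ℝ)) ^ 2
                * (X t i j) ^ 2 := by ring
          rw [h1]
          exact mul_le_mul_of_nonneg_right (pow_le_pow_left₀ ha0 hac 2) (sq_nonneg _)
        have hsum : (∑ t, ∑ i, ∑ j, (RUnif n T m ω X t i j) ^ 2)
            ≤ c ^ 2 * (∑ t, ∑ i, ∑ j, (X t i j) ^ 2) := by
          rw [Finset.mul_sum]
          apply Finset.sum_le_sum
          intro t _
          rw [Finset.mul_sum]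
          apply Finset.sum_le_sum
          intro i _
          rw [Finset.mul_sum]
          apply Finset.sum_le_sum
          intro j _
          exact hsq t i j
        show Real.sqrt (∑ t, ∑ i, ∑ j, (RUnif n T m ω X t i j) ^ 2)
            ≤ c * Real.sqrt (∑ t, ∑ i, ∑ j, (X t i j) ^ 2)
        calc Real.sqrt (∑ t, ∑ i, ∑ j, (RUnif n T m ω X t i j) ^ 2)
            ≤ Real.sqrt (c ^ 2 * (∑ t, ∑ i, ∑ j, (X t i j) ^ 2)) :=
              Real.sqrt_le_sqrt hsum
          _ = c * Real.sqrt (∑ t, ∑ i, ∑ j, (X t i j) ^ 2) := by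
              rw [Real.sqrt_mul (sq_nonneg c), Real.sqrt_sq hc0]
      apply csInf_le
      · exact ⟨0, fun x hx => hx.1⟩
      · exact hmem
    have hmono : Nat.card {ω : Fin m → Fin n × Fin n × Fin T // P ω}
        ≤ Nat.card {ω : Fin m → Fin n × Fin n × Fin T // opNormT (RUnif n T m ω) ≤ c} := by
      rw [Nat.card_eq_fintype_card, Nat.card_eq_fintype_card]
      exact Fintype.card_subtype_mono _ _ himp
    have : ((Nat.card {ω : Fin m → Fin n × Fin n × Fin T // P ω}) : ℝ)
        ≤ ((Nat.card {ω : Fin m → Fin n × Fin n × Fin T //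
            opNormT (RUnif n T m ω) ≤ c}) : ℝ) := by exact_mod_cast hmono
    calc (1 - Nr ^ ((1:ℝ) - β)) * Nr ^ m
        ≤ ((Finset.univ.filter P).card : ℝ) := hgoodR
      _ = ((Nat.card {ω : Fin m → Fin n × Fin n × Fin T // P ω}) : ℝ) := by rw [hcard1]
      _ ≤ _ := this

end
end
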